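/- arXiv:2004.11290 — 6 statements merged into one kernel-verified Lean document; each statement's English description precedes it below -/
import Mathlib

section
/- g₀(0) = 0, g₀ is nondecreasing on [0,∞), g₀(s) ≤ min(1, ℓ·s) for every s ≥ 0, and lim_{s→∞} g₀(s) = 1. -/
open MeasureTheory Set Filter

/-- Hypotheses on the function `f₁` from Section 6.1 of the paper. -/
structure F1Hyp (ℓ ℓ₁ : ℝ) (f₁ : ℝ → ℝ) : Prop where
  hl : 0 < ℓ
  hl1 : 0 < ℓ₁
  cont : ContinuousOn f₁ (Icc 0 1)
  diff : ∃ d : ℝ → ℝ, ContinuousOn d (Ioc 0 1) ∧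
    ∀ t ∈ Ioc (0:ℝ) 1, HasDerivWithinAt f₁ (d t) (Ioc 0 1) t
  anti : StrictAntiOn f₁ (Icc 0 1)
  nonneg : ∀ t ∈ Icc (0:ℝ) 1, 0 ≤ f₁ t
  f10 : f₁ 0 = ℓ
  f11 : f₁ 1 = 0
  convexSqrt : ConvexOn ℝ (Icc 0 1) (fun u => f₁ (Real.sqrt u))
  lim0 : Tendsto (fun s => (f₁ s - ℓ + ℓ₁ * s) / s) (nhdsWithin 0 (Ioi 0)) (nhds 0)

/-- `γ` is admissible, with a.e. derivative `γ'` (absolute continuity is encoded by the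
fundamental theorem of calculus representation with an `L¹` derivative). -/
def Admissible (γ γ' : ℝ → ℝ) : Prop :=
  IntegrableOn γ' (Icc 0 1) ∧
  (∀ t ∈ Icc (0:ℝ) 1, γ t = ∫ u in (0:ℝ)..t, γ' u) ∧
  (∀ t ∈ Icc (0:ℝ) 1, 0 ≤ γ t ∧ γ t ≤ 1) ∧
  γ 0 = 0 ∧ γ 1 = 0

/-- The energy in the characterization (6.11). -/
noncomputable def energy (f₁ : ℝ → ℝ) (s : ℝ) (γ γ' : ℝ → ℝ) : ℝ :=
  ∫ t in (0:ℝ)..1, Real.sqrt (s ^ 2 * (f₁ (Real.sqrt (γ t))) ^ 2 + (γ' t) ^ 2 / 4)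

/-- The cohesive energy density of pristine material, via characterization (6.11). -/
noncomputable def g0 (f₁ : ℝ → ℝ) (s : ℝ) : ℝ :=
  sInf {x | ∃ γ γ' : ℝ → ℝ, Admissible γ γ' ∧ x = energy f₁ s γ γ'}




lemma my_sqrt_add_le {a b : ℝ} (ha : 0 ≤ a) (hb : 0 ≤ b) :
    Real.sqrt (a + b) ≤ Real.sqrt a + Real.sqrt b := by
  have h : a + b ≤ (Real.sqrt a + Real.sqrt b) ^ 2 := by
    have h1 := Real.sq_sqrt ha; have h2 := Real.sq_sqrt hb
    have h3 := Real.sqrt_nonneg a; have h4 := Real.sqrt_nonneg b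
    nlinarith
  calc Real.sqrt (a + b) ≤ Real.sqrt ((Real.sqrt a + Real.sqrt b) ^ 2) :=
        Real.sqrt_le_sqrt h
    _ = _ := Real.sqrt_sq (by positivity)

variable {ℓ ℓ₁ : ℝ} {f₁ : ℝ → ℝ}

lemma f1_nonneg (hf : F1Hyp ℓ ℓ₁ f₁) {x : ℝ} (hx : x ∈ Icc (0:ℝ) 1) : 0 ≤ f₁ x :=
  hf.nonneg x hx

lemma f1_le (hf : F1Hyp ℓ ℓ₁ f₁) {x : ℝ} (hx : x ∈ Icc (0:ℝ) 1) : f₁ x ≤ ℓ := by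
  have := hf.anti.antitoneOn (left_mem_Icc.2 zero_le_one) hx hx.1
  rw [hf.f10] at this; exact this

lemma sqrt_mem_Icc {x : ℝ} (hx : x ∈ Icc (0:ℝ) 1) : Real.sqrt x ∈ Icc (0:ℝ) 1 :=
  ⟨Real.sqrt_nonneg x, by rw [show (1:ℝ) = Real.sqrt 1 by simp]; exact Real.sqrt_le_sqrt hx.2⟩

lemma gamma_cont {γ γ' : ℝ → ℝ} (h : Admissible γ γ') : ContinuousOn γ (Icc 0 1) := by
  have hprim : ContinuousOn (fun x => ∫ u in (0:ℝ)..x, γ' u) (Icc 0 1) := by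
    have := intervalIntegral.continuousOn_primitive_interval
      (a := 0) (b := 1) (f := γ') (μ := volume) ?_
    · simpa [uIcc_of_le (zero_le_one' ℝ)] using this
    · simpa [uIcc_of_le (zero_le_one' ℝ)] using h.1
  exact hprim.congr h.2.1

lemma F_cont (hf : F1Hyp ℓ ℓ₁ f₁) {γ γ' : ℝ → ℝ} (h : Admissible γ γ') :
    ContinuousOn (fun t => f₁ (Real.sqrt (γ t))) (Icc 0 1) := by
  apply hf.cont.comp (Real.continuous_sqrt.comp_continuousOn (gamma_cont h))
  intro t ht
  exact sqrt_mem_Icc (h.2.2.1 t ht)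

/-- pointwise upper bound for the energy integrand -/
lemma integrand_le {s a b : ℝ} (hl : 0 < ℓ) (ha0 : 0 ≤ a) (haℓ : a ≤ ℓ) :
    Real.sqrt (s ^ 2 * a ^ 2 + b ^ 2 / 4) ≤ |s| * ℓ + |b| / 2 := by
  have h1 : Real.sqrt (s ^ 2 * a ^ 2) = |s| * a := by
    rw [show s ^ 2 * a ^ 2 = (s * a) ^ 2 by ring, Real.sqrt_sq_eq_abs, abs_mul,
      abs_of_nonneg ha0]
  have h2 : Real.sqrt (b ^ 2 / 4) = |b| / 2 := by
    rw [show b ^ 2 / 4 = (b / 2) ^ 2 by ring, Real.sqrt_sq_eq_abs, abs_div]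
    norm_num
  calc Real.sqrt (s ^ 2 * a ^ 2 + b ^ 2 / 4)
      ≤ Real.sqrt (s ^ 2 * a ^ 2) + Real.sqrt (b ^ 2 / 4) :=
        my_sqrt_add_le (by positivity) (by positivity)
    _ = |s| * a + |b| / 2 := by rw [h1, h2]
    _ ≤ |s| * ℓ + |b| / 2 := by
        have := mul_le_mul_of_nonneg_left haℓ (abs_nonneg s); linarith

lemma integrand_ge_fst {s a b : ℝ} (hs : 0 ≤ s) (ha : 0 ≤ a) :
    s * a ≤ Real.sqrt (s ^ 2 * a ^ 2 + b ^ 2 / 4) := by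
  have h1 : Real.sqrt (s ^ 2 * a ^ 2) = s * a := by
    rw [show s ^ 2 * a ^ 2 = (s * a) ^ 2 by ring]
    exact Real.sqrt_sq (mul_nonneg hs ha)
  have h2 : Real.sqrt (s ^ 2 * a ^ 2) ≤ Real.sqrt (s ^ 2 * a ^ 2 + b ^ 2 / 4) :=
    Real.sqrt_le_sqrt (le_add_of_nonneg_right (by positivity))
  linarith

lemma integrand_ge_snd {s a b : ℝ} :
    |b| / 2 ≤ Real.sqrt (s ^ 2 * a ^ 2 + b ^ 2 / 4) := by
  have h1 : Real.sqrt (b ^ 2 / 4) = |b| / 2 := by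
    rw [show b ^ 2 / 4 = (b / 2) ^ 2 by ring, Real.sqrt_sq_eq_abs, abs_div]
    norm_num
  have h2 : Real.sqrt (b ^ 2 / 4) ≤ Real.sqrt (s ^ 2 * a ^ 2 + b ^ 2 / 4) :=
    Real.sqrt_le_sqrt (le_add_of_nonneg_left (by positivity))
  linarith

lemma energy_integrable (hf : F1Hyp ℓ ℓ₁ f₁) {γ γ' : ℝ → ℝ} (h : Admissible γ γ') (s : ℝ) :
    IntervalIntegrable
      (fun t => Real.sqrt (s ^ 2 * (f₁ (Real.sqrt (γ t))) ^ 2 + (γ' t) ^ 2 / 4))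
      volume 0 1 := by
  rw [intervalIntegrable_iff_integrableOn_Ioc_of_le zero_le_one]
  have hγ'm : AEStronglyMeasurable γ' (volume.restrict (Ioc 0 1)) :=
    (h.1.mono_set Ioc_subset_Icc_self).aestronglyMeasurable
  have hFm : AEMeasurable (fun t => f₁ (Real.sqrt (γ t))) (volume.restrict (Ioc 0 1)) := by
    have := (F_cont hf h).aemeasurable measurableSet_Icc (μ := volume)
    exact this.mono_measure (Measure.restrict_mono Ioc_subset_Icc_self le_rfl)
  have hm : AEStronglyMeasurable
      (fun t => Real.sqrt (s ^ 2 * (f₁ (Real.sqrt (γ t))) ^ 2 + (γ' t) ^ 2 / 4))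
      (volume.restrict (Ioc 0 1)) := by
    apply AEMeasurable.aestronglyMeasurable
    have hγ'a : AEMeasurable γ' (volume.restrict (Ioc 0 1)) := hγ'm.aemeasurable
    have h1 : AEMeasurable (fun t => s ^ 2 * (f₁ (Real.sqrt (γ t))) ^ 2 + (γ' t) ^ 2 / 4)
        (volume.restrict (Ioc 0 1)) :=
      (aemeasurable_const.mul (hFm.pow_const 2)).add ((hγ'a.pow_const 2).div_const 4)
    exact (Real.continuous_sqrt.measurable).comp_aemeasurable h1
  apply Integrable.mono' (g := fun t => |s| * ℓ + |γ' t| / 2) ?_ hm ?_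
  · exact (integrable_const _).add
      (((h.1.mono_set Ioc_subset_Icc_self).abs.div_const 2))
  · filter_upwards [ae_restrict_mem measurableSet_Ioc] with t ht
    have hγt := h.2.2.1 t (Ioc_subset_Icc_self ht)
    have hst := sqrt_mem_Icc hγt
    rw [Real.norm_eq_abs, abs_of_nonneg (Real.sqrt_nonneg _)]
    exact integrand_le hf.hl (f1_nonneg hf hst) (f1_le hf hst)

lemma energy_nonneg (s : ℝ) (γ γ' : ℝ → ℝ) : 0 ≤ energy f₁ s γ γ' :=
  intervalIntegral.integral_nonneg zero_le_one (fun t _ => Real.sqrt_nonneg _)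

lemma zero_admissible : Admissible (fun _ => (0:ℝ)) (fun _ => (0:ℝ)) := by
  refine ⟨integrableOn_const (by simp) (by simp), ?_, ?_, rfl, rfl⟩
  · intro t _; simp
  · intro t _; simp

lemma g0_set_nonempty (s : ℝ) :
    {x | ∃ γ γ' : ℝ → ℝ, Admissible γ γ' ∧ x = energy f₁ s γ γ'}.Nonempty :=
  ⟨energy f₁ s (fun _ => 0) (fun _ => 0), _, _, zero_admissible, rfl⟩

lemma g0_set_bddBelow (s : ℝ) :
    BddBelow {x | ∃ γ γ' : ℝ → ℝ, Admissible γ γ' ∧ x = energy f₁ s γ γ'} := by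
  refine ⟨0, fun x hx => ?_⟩
  obtain ⟨γ, γ', _, rfl⟩ := hx
  exact energy_nonneg s γ γ'

lemma g0_nonneg (s : ℝ) : 0 ≤ g0 f₁ s := by
  apply le_csInf (g0_set_nonempty s)
  rintro x ⟨γ, γ', _, rfl⟩
  exact energy_nonneg s γ γ'

lemma energy_zero_fun (hf : F1Hyp ℓ ℓ₁ f₁) {s : ℝ} (hs : 0 ≤ s) :
    energy f₁ s (fun _ => 0) (fun _ => 0) = s * ℓ := by
  unfold energy
  have h : (fun t : ℝ => Real.sqrt
      (s ^ 2 * (f₁ (Real.sqrt ((fun _ : ℝ => (0:ℝ)) t))) ^ 2 + ((fun _ : ℝ => (0:ℝ)) t) ^ 2 / 4))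
      = fun _ : ℝ => s * ℓ := by
    funext t
    simp only [Real.sqrt_zero, hf.f10]
    rw [show s ^ 2 * ℓ ^ 2 + (0:ℝ) ^ 2 / 4 = (s * ℓ) ^ 2 by ring]
    exact Real.sqrt_sq (mul_nonneg hs hf.hl.le)
  rw [h]
  simp

lemma g0_zero (hf : F1Hyp ℓ ℓ₁ f₁) : g0 f₁ 0 = 0 := by
  refine le_antisymm ?_ (g0_nonneg 0)
  have h0 : (0:ℝ) ∈ {x | ∃ γ γ' : ℝ → ℝ, Admissible γ γ' ∧ x = energy f₁ 0 γ γ'} :=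
    ⟨_, _, zero_admissible, by rw [energy_zero_fun hf le_rfl, zero_mul]⟩
  exact csInf_le (g0_set_bddBelow 0) h0

lemma g0_le_linear (hf : F1Hyp ℓ ℓ₁ f₁) {s : ℝ} (hs : 0 ≤ s) : g0 f₁ s ≤ ℓ * s := by
  calc g0 f₁ s ≤ energy f₁ s (fun _ => 0) (fun _ => 0) :=
        csInf_le (g0_set_bddBelow s) ⟨_, _, zero_admissible, rfl⟩
    _ = ℓ * s := by rw [energy_zero_fun hf hs]; ring

lemma g0_mono (hf : F1Hyp ℓ ℓ₁ f₁) : MonotoneOn (g0 f₁) (Ici 0) := by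
  intro s₁ hs₁ s₂ _ h12
  apply le_csInf (g0_set_nonempty s₂)
  rintro x ⟨γ, γ', hA, rfl⟩
  have hle : energy f₁ s₁ γ γ' ≤ energy f₁ s₂ γ γ' := by
    apply intervalIntegral.integral_mono_on zero_le_one (energy_integrable hf hA s₁)
      (energy_integrable hf hA s₂)
    intro t ht
    apply Real.sqrt_le_sqrt
    have h2 : s₁ ^ 2 ≤ s₂ ^ 2 := by nlinarith [mem_Ici.1 hs₁]
    nlinarith [sq_nonneg (f₁ (Real.sqrt (γ t)))]
  exact le_trans (csInf_le (g0_set_bddBelow s₁) ⟨γ, γ', hA, rfl⟩) hle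

lemma gamma'_ii {γ γ' : ℝ → ℝ} (h : Admissible γ γ') {a b : ℝ}
    (hab : a ≤ b) (ha : 0 ≤ a) (hb : b ≤ 1) : IntervalIntegrable γ' volume a b := by
  rw [intervalIntegrable_iff_integrableOn_Ioc_of_le hab]
  exact h.1.mono_set fun x hx => ⟨le_trans ha hx.1.le, le_trans hx.2 hb⟩

lemma integral_abs_ge {γ γ' : ℝ → ℝ} (h : Admissible γ γ') {t₀ : ℝ}
    (ht₀ : t₀ ∈ Icc (0:ℝ) 1) :
    2 * γ t₀ ≤ ∫ t in (0:ℝ)..1, |γ' t| := by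
  have hI1 : IntervalIntegrable γ' volume 0 t₀ := gamma'_ii h ht₀.1 le_rfl ht₀.2
  have hI2 : IntervalIntegrable γ' volume t₀ 1 := gamma'_ii h ht₀.2 ht₀.1 le_rfl
  have hsplit : (∫ t in (0:ℝ)..t₀, |γ' t|) + (∫ t in t₀..(1:ℝ), |γ' t|)
      = ∫ t in (0:ℝ)..1, |γ' t| :=
    intervalIntegral.integral_add_adjacent_intervals hI1.abs hI2.abs
  have he1 : (∫ t in (0:ℝ)..t₀, γ' t) = γ t₀ := (h.2.1 t₀ ht₀).symm
  have he2 : (∫ t in t₀..(1:ℝ), γ' t) = - γ t₀ := by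
    have hadd : (∫ t in (0:ℝ)..t₀, γ' t) + (∫ t in t₀..(1:ℝ), γ' t) = ∫ t in (0:ℝ)..1, γ' t :=
      intervalIntegral.integral_add_adjacent_intervals hI1 hI2
    have h1 : (∫ t in (0:ℝ)..1, γ' t) = γ 1 := (h.2.1 1 (right_mem_Icc.2 zero_le_one)).symm
    rw [he1, h1, h.2.2.2.2] at hadd
    linarith
  have hb1 : γ t₀ ≤ ∫ t in (0:ℝ)..t₀, |γ' t| := by
    have := intervalIntegral.abs_integral_le_integral_abs (f := γ') (μ := volume) ht₀.1
    rw [he1] at this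
    exact le_trans (le_abs_self _) this
  have hb2 : γ t₀ ≤ ∫ t in t₀..(1:ℝ), |γ' t| := by
    have := intervalIntegral.abs_integral_le_integral_abs (f := γ') (μ := volume) ht₀.2
    rw [he2, abs_neg] at this
    exact le_trans (le_abs_self _) this
  linarith

lemma energy_ge_sup (hf : F1Hyp ℓ ℓ₁ f₁) {γ γ' : ℝ → ℝ} (h : Admissible γ γ') (s : ℝ)
    {t₀ : ℝ} (ht₀ : t₀ ∈ Icc (0:ℝ) 1) : γ t₀ ≤ energy f₁ s γ γ' := by
  have hii : IntervalIntegrable γ' volume 0 1 := gamma'_ii h zero_le_one le_rfl le_rfl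
  have h1 : (∫ t in (0:ℝ)..1, |γ' t| / 2) ≤ energy f₁ s γ γ' := by
    apply intervalIntegral.integral_mono_on zero_le_one (hii.abs.div_const 2)
      (energy_integrable hf h s)
    intro t _
    exact integrand_ge_snd
  rw [intervalIntegral.integral_div] at h1
  have h2 := integral_abs_ge h ht₀
  linarith

lemma energy_ge_const (hf : F1Hyp ℓ ℓ₁ f₁) {γ γ' : ℝ → ℝ} (h : Admissible γ γ')
    {s δ : ℝ} (hs : 0 ≤ s) (hδ : δ ∈ Ioo (0:ℝ) 1)
    (hb : ∀ t ∈ Icc (0:ℝ) 1, γ t ≤ 1 - δ) :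
    s * f₁ (Real.sqrt (1 - δ)) ≤ energy f₁ s γ γ' := by
  have hδmem : (1 - δ) ∈ Icc (0:ℝ) 1 := ⟨by linarith [hδ.2], by linarith [hδ.1]⟩
  have hkey : (∫ t in (0:ℝ)..1, s * f₁ (Real.sqrt (1 - δ))) ≤ energy f₁ s γ γ' := by
    apply intervalIntegral.integral_mono_on zero_le_one intervalIntegrable_const
      (energy_integrable hf h s)
    intro t ht
    have hγt := h.2.2.1 t ht
    have hmono : f₁ (Real.sqrt (1 - δ)) ≤ f₁ (Real.sqrt (γ t)) := by
      apply hf.anti.antitoneOn (sqrt_mem_Icc hγt) (sqrt_mem_Icc hδmem)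
      exact Real.sqrt_le_sqrt (hb t ht)
    calc s * f₁ (Real.sqrt (1 - δ)) ≤ s * f₁ (Real.sqrt (γ t)) :=
          mul_le_mul_of_nonneg_left hmono hs
      _ ≤ _ := integrand_ge_fst hs (f1_nonneg hf (sqrt_mem_Icc hγt))
  simpa using hkey

lemma g0_ge (hf : F1Hyp ℓ ℓ₁ f₁) {s δ : ℝ} (hs : 0 ≤ s) (hδ : δ ∈ Ioo (0:ℝ) 1) :
    min (1 - δ) (s * f₁ (Real.sqrt (1 - δ))) ≤ g0 f₁ s := by
  apply le_csInf (g0_set_nonempty s)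
  rintro x ⟨γ, γ', hA, rfl⟩
  by_cases hc : ∃ t₀ ∈ Icc (0:ℝ) 1, 1 - δ ≤ γ t₀
  · obtain ⟨t₀, ht₀, hγt₀⟩ := hc
    exact le_trans (min_le_left _ _) (le_trans hγt₀ (energy_ge_sup hf hA s ht₀))
  · push_neg at hc
    exact le_trans (min_le_right _ _)
      (energy_ge_const hf hA hs hδ (fun t ht => (hc t ht).le))

/-- test profile `γₙ(t) = 1 - (1-2t)^(2n+2)` -/
noncomputable def Gf (n : ℕ) (t : ℝ) : ℝ := 1 - (1 - 2*t) ^ (2*n+2)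

/-- derivative of `Gf n` -/
noncomputable def Df (n : ℕ) (t : ℝ) : ℝ := (4*n+4) * (1 - 2*t) ^ (2*n+1)

lemma Gf_hasDeriv (n : ℕ) (t : ℝ) : HasDerivAt (Gf n) (Df n t) t := by
  have h0 : HasDerivAt (fun t : ℝ => 1 - 2*t) (-2) t := by
    exact (((hasDerivAt_id' t).const_mul (2:ℝ)).const_sub (1:ℝ)).congr_deriv (by ring)
  have h1 := h0.pow (2*n+2)
  have h2 := h1.const_sub 1
  refine HasDerivAt.congr_deriv (f := Gf n) h2 ?_
  simp only [Df]
  push_cast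
  ring_nf

lemma Df_cont (n : ℕ) : Continuous (Df n) := by
  unfold Df; fun_prop

lemma Gf_pow_mem {n : ℕ} {t : ℝ} (ht : t ∈ Icc (0:ℝ) 1) :
    (1 - 2*t) ^ (2*n+2) ∈ Icc (0:ℝ) 1 := by
  rw [show 2*n+2 = 2*(n+1) by ring, pow_mul]
  constructor
  · positivity
  · apply pow_le_one₀ (sq_nonneg _)
    nlinarith [ht.1, ht.2]

lemma Gf_zero (n : ℕ) : Gf n 0 = 0 := by simp [Gf]

lemma Gf_one (n : ℕ) : Gf n 1 = 0 := by
  simp only [Gf]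
  rw [show (1:ℝ) - 2*1 = -1 by norm_num, Even.neg_one_pow ⟨n+1, by ring⟩]
  ring

lemma Gf_half (n : ℕ) : Gf n (1/2) = 1 := by
  simp only [Gf]
  rw [show (1:ℝ) - 2*(1/2) = 0 by norm_num, zero_pow (by omega)]
  ring

lemma Gf_admissible (n : ℕ) : Admissible (Gf n) (Df n) := by
  have hftc : ∀ t : ℝ, (∫ u in (0:ℝ)..t, Df n u) = Gf n t := by
    intro t
    have := intervalIntegral.integral_eq_sub_of_hasDerivAt
      (f := Gf n) (f' := Df n) (a := 0) (b := t)
      (fun x _ => Gf_hasDeriv n x) ((Df_cont n).intervalIntegrable 0 t)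
    rw [this]
    simp [Gf]
  refine ⟨(Df_cont n).integrableOn_Icc, fun t _ => (hftc t).symm, ?_, ?_, ?_⟩
  · intro t ht
    have := Gf_pow_mem (n := n) ht
    constructor
    · simp only [Gf]; linarith [this.2]
    · simp only [Gf]; linarith [this.1]
  · exact Gf_zero n
  · exact Gf_one n

lemma intDf (n : ℕ) : (∫ t in (0:ℝ)..1, |Df n t|) = 2 := by
  have hint : ∀ a b : ℝ, (∫ t in a..b, Df n t) = Gf n b - Gf n a := fun a b =>
    intervalIntegral.integral_eq_sub_of_hasDerivAt (fun x _ => Gf_hasDeriv n x)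
      ((Df_cont n).intervalIntegrable a b)
  have h1 : (∫ t in (0:ℝ)..(1/2:ℝ), |Df n t|) = 1 := by
    rw [intervalIntegral.integral_congr (g := Df n) ?_, hint, Gf_half, Gf_zero]
    · ring
    · intro t ht
      rw [uIcc_of_le (by norm_num : (0:ℝ) ≤ 1/2)] at ht
      have h0 : (0:ℝ) ≤ 1 - 2*t := by linarith [ht.2]
      exact abs_of_nonneg (mul_nonneg (by positivity) (pow_nonneg h0 _))
  have h2 : (∫ t in (1/2:ℝ)..(1:ℝ), |Df n t|) = 1 := by
    rw [intervalIntegral.integral_congr (g := fun t => -(Df n t)) ?_]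
    · rw [intervalIntegral.integral_neg, hint, Gf_half, Gf_one]
      ring
    · intro t ht
      rw [uIcc_of_le (by norm_num : (1/2:ℝ) ≤ 1)] at ht
      have hle : (1 - 2*t) ≤ 0 := by linarith [ht.1]
      have : Df n t ≤ 0 := by
        apply mul_nonpos_of_nonneg_of_nonpos (by positivity)
        exact Odd.pow_nonpos ⟨n, by ring⟩ hle
      exact abs_of_nonpos this
  have hsplit : (∫ t in (0:ℝ)..(1/2:ℝ), |Df n t|) + (∫ t in (1/2:ℝ)..(1:ℝ), |Df n t|)
      = ∫ t in (0:ℝ)..1, |Df n t| :=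
    intervalIntegral.integral_add_adjacent_intervals
      ((Df_cont n).abs.intervalIntegrable _ _) ((Df_cont n).abs.intervalIntegrable _ _)
  linarith

lemma energy_Gf_le (hf : F1Hyp ℓ ℓ₁ f₁) (n : ℕ) {s : ℝ} (hs : 0 ≤ s) :
    energy f₁ s (Gf n) (Df n) ≤ s * (∫ t in (0:ℝ)..1, f₁ (Real.sqrt (Gf n t))) + 1 := by
  have hA := Gf_admissible n
  have hFc : ContinuousOn (fun t => f₁ (Real.sqrt (Gf n t))) (Icc 0 1) := F_cont hf hA
  have hFci : IntervalIntegrable (fun t => f₁ (Real.sqrt (Gf n t))) volume 0 1 := by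
    apply ContinuousOn.intervalIntegrable
    rwa [uIcc_of_le zero_le_one]
  have hDi : IntervalIntegrable (fun t => |Df n t| / 2) volume 0 1 :=
    ((Df_cont n).abs.intervalIntegrable _ _).div_const 2
  have hstep : energy f₁ s (Gf n) (Df n)
      ≤ ∫ t in (0:ℝ)..1, (s * f₁ (Real.sqrt (Gf n t)) + |Df n t| / 2) := by
    apply intervalIntegral.integral_mono_on zero_le_one (energy_integrable hf hA s)
      ((hFci.const_mul s).add hDi)
    intro t ht
    have hγt := hA.2.2.1 t ht
    have hFnn : 0 ≤ f₁ (Real.sqrt (Gf n t)) := f1_nonneg hf (sqrt_mem_Icc hγt)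
    have h1 : Real.sqrt (s ^ 2 * (f₁ (Real.sqrt (Gf n t))) ^ 2) = s * f₁ (Real.sqrt (Gf n t)) := by
      rw [show s ^ 2 * (f₁ (Real.sqrt (Gf n t))) ^ 2 = (s * f₁ (Real.sqrt (Gf n t))) ^ 2 by ring]
      exact Real.sqrt_sq (mul_nonneg hs hFnn)
    have h2 : Real.sqrt ((Df n t) ^ 2 / 4) = |Df n t| / 2 := by
      rw [show (Df n t) ^ 2 / 4 = (Df n t / 2) ^ 2 by ring, Real.sqrt_sq_eq_abs, abs_div]
      norm_num
    calc Real.sqrt (s ^ 2 * (f₁ (Real.sqrt (Gf n t))) ^ 2 + (Df n t) ^ 2 / 4)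
        ≤ Real.sqrt (s ^ 2 * (f₁ (Real.sqrt (Gf n t))) ^ 2)
          + Real.sqrt ((Df n t) ^ 2 / 4) := my_sqrt_add_le (by positivity) (by positivity)
      _ = _ := by rw [h1, h2]
  have heq : (∫ t in (0:ℝ)..1, (s * f₁ (Real.sqrt (Gf n t)) + |Df n t| / 2))
      = s * (∫ t in (0:ℝ)..1, f₁ (Real.sqrt (Gf n t))) + 1 := by
    rw [intervalIntegral.integral_add (hFci.const_mul s) hDi,
      intervalIntegral.integral_const_mul, intervalIntegral.integral_div, intDf]
    norm_num
  linarith [hstep, heq.le, heq.ge]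

lemma tendsto_intF (hf : F1Hyp ℓ ℓ₁ f₁) :
    Tendsto (fun n => ∫ t in (0:ℝ)..1, f₁ (Real.sqrt (Gf n t))) atTop (nhds 0) := by
  have key := intervalIntegral.tendsto_integral_filter_of_dominated_convergence
    (μ := volume) (a := 0) (b := 1) (l := atTop)
    (F := fun n t => f₁ (Real.sqrt (Gf n t))) (f := fun _ => (0:ℝ)) (bound := fun _ => ℓ)
    ?_ ?_ ?_ ?_
  · simpa using key
  · apply Eventually.of_forall
    intro n
    have h0 : AEMeasurable (fun t => f₁ (Real.sqrt (Gf n t))) (volume.restrict (Icc 0 1)) :=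
      (F_cont hf (Gf_admissible n)).aemeasurable measurableSet_Icc
    have h1 : AEMeasurable (fun t => f₁ (Real.sqrt (Gf n t)))
        (volume.restrict (Set.uIoc (0:ℝ) 1)) :=
      h0.mono_measure (Measure.restrict_mono
        (by rw [uIoc_of_le zero_le_one]; exact Ioc_subset_Icc_self) le_rfl)
    exact h1.aestronglyMeasurable
  · apply Eventually.of_forall
    intro n
    apply Eventually.of_forall
    intro x hx
    rw [uIoc_of_le zero_le_one] at hx
    have hγ := (Gf_admissible n).2.2.1 x (Ioc_subset_Icc_self hx)
    have hm := sqrt_mem_Icc hγ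
    rw [Real.norm_eq_abs, abs_of_nonneg (f1_nonneg hf hm)]
    exact f1_le hf hm
  · exact intervalIntegrable_const
  · have hne : ∀ᵐ x : ℝ ∂volume, x ≠ 1 := by
      rw [ae_iff]
      simp only [not_not, Set.setOf_eq_eq_singleton]
      exact measure_singleton 1
    filter_upwards [hne] with x hx hmem
    rw [uIoc_of_le zero_le_one] at hmem
    have hlt : x < 1 := lt_of_le_of_ne hmem.2 hx
    have habs : |1 - 2*x| < 1 := by
      rw [abs_lt]; constructor <;> [linarith [hlt]; linarith [hmem.1]]
    have harit : Tendsto (fun n : ℕ => 2*n+2) atTop atTop :=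
      tendsto_atTop_mono (fun n => by simp only [id_eq]; omega) tendsto_id
    have hpow : Tendsto (fun n => (1 - 2*x) ^ (2*n+2)) atTop (nhds 0) :=
      (tendsto_pow_atTop_nhds_zero_of_abs_lt_one habs).comp harit
    have hG : Tendsto (fun n => Gf n x) atTop (nhds 1) := by
      have := (tendsto_const_nhds : Tendsto (fun _ : ℕ => (1:ℝ)) atTop (nhds 1)).sub hpow
      simpa [Gf] using this
    have hsq : Tendsto (fun n => Real.sqrt (Gf n x)) atTop (nhds 1) := by
      have := (Real.continuous_sqrt.tendsto 1).comp hG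
      rw [Real.sqrt_one] at this
      exact this
    have hcw : ContinuousWithinAt f₁ (Icc 0 1) 1 := hf.cont 1 (right_mem_Icc.2 zero_le_one)
    have hin : ∀ n : ℕ, Real.sqrt (Gf n x) ∈ Icc (0:ℝ) 1 :=
      fun n => sqrt_mem_Icc ((Gf_admissible n).2.2.1 x (Ioc_subset_Icc_self hmem))
    have := hcw.tendsto.comp
      (tendsto_nhdsWithin_of_tendsto_nhds_of_eventually_within _ hsq
        (Eventually.of_forall hin))
    rw [hf.f11] at this
    exact this

lemma g0_le_one (hf : F1Hyp ℓ ℓ₁ f₁) {s : ℝ} (hs : 0 ≤ s) : g0 f₁ s ≤ 1 := by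
  have key : ∀ n : ℕ, g0 f₁ s ≤ s * (∫ t in (0:ℝ)..1, f₁ (Real.sqrt (Gf n t))) + 1 :=
    fun n => le_trans (csInf_le (g0_set_bddBelow s) ⟨Gf n, Df n, Gf_admissible n, rfl⟩)
      (energy_Gf_le hf n hs)
  have hlim : Tendsto (fun n : ℕ => s * (∫ t in (0:ℝ)..1, f₁ (Real.sqrt (Gf n t))) + 1)
      atTop (nhds 1) := by
    have h1 := (tendsto_intF hf).const_mul s
    have := h1.add (tendsto_const_nhds : Tendsto (fun _ : ℕ => (1:ℝ)) atTop (nhds 1))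
    simpa using this
  exact ge_of_tendsto' hlim key

/-- `g₀(0) = 0`, `g₀` is nondecreasing on `[0,∞)`, `g₀(s) ≤ min(1, ℓ s)`
for every `s ≥ 0`, and `g₀(s) → 1` as `s → ∞`. -/
theorem stmt_0 (ℓ ℓ₁ : ℝ) (f₁ : ℝ → ℝ) (hf : F1Hyp ℓ ℓ₁ f₁) :
    g0 f₁ 0 = 0 ∧ MonotoneOn (g0 f₁) (Ici 0) ∧
    (∀ s : ℝ, 0 ≤ s → g0 f₁ s ≤ min 1 (ℓ * s)) ∧
    Tendsto (g0 f₁) atTop (nhds 1) := by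
  refine ⟨g0_zero hf, g0_mono hf, ?_, ?_⟩
  · intro s hs
    exact le_min (g0_le_one hf hs) (g0_le_linear hf hs)
  · rw [Metric.tendsto_atTop]
    intro ε hε
    set δ : ℝ := min (ε/2) (1/2) with hδdef
    have hδ : δ ∈ Ioo (0:ℝ) 1 := by
      constructor
      · exact lt_min (by linarith) (by norm_num)
      · exact lt_of_le_of_lt (min_le_right _ _) (by norm_num)
    have hδε : δ < ε := lt_of_le_of_lt (min_le_left _ _) (by linarith)
    have h1δ : Real.sqrt (1 - δ) ∈ Icc (0:ℝ) 1 :=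
      sqrt_mem_Icc ⟨by linarith [hδ.2], by linarith [hδ.1]⟩
    have hc : 0 < f₁ (Real.sqrt (1 - δ)) := by
      have hlt : Real.sqrt (1 - δ) < 1 := by
        have h := Real.sqrt_lt_sqrt (by linarith [hδ.2] : (0:ℝ) ≤ 1 - δ)
          (by linarith [hδ.1] : 1 - δ < 1)
        simpa using h
      have := hf.anti h1δ (right_mem_Icc.2 zero_le_one) hlt
      rwa [hf.f11] at this
    refine ⟨max 0 ((1 - δ) / f₁ (Real.sqrt (1 - δ))), fun s hsN => ?_⟩
    have hs0 : 0 ≤ s := le_trans (le_max_left _ _) hsN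
    have hsc : 1 - δ ≤ s * f₁ (Real.sqrt (1 - δ)) := by
      have h2 : (1 - δ) / f₁ (Real.sqrt (1 - δ)) ≤ s := le_trans (le_max_right _ _) hsN
      rwa [div_le_iff₀ hc] at h2
    have hge : 1 - δ ≤ g0 f₁ s := by
      have := g0_ge hf hs0 hδ
      rwa [min_eq_left hsc] at this
    have hle : g0 f₁ s ≤ 1 := g0_le_one hf hs0
    rw [Real.dist_eq, abs_of_nonpos (by linarith)]
    linarith
end

section
/- g₀ is strictly subadditive on (0,∞): for every s₁ > 0 and s₂ > 0 one has g₀(s₁ + s₂) < g₀(s₁) + g₀(s₂). -/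
open MeasureTheory Set Filter

namespace SSA

variable {ℓ ℓ₁ : ℝ} {f₁ : ℝ → ℝ} {γ γ' : ℝ → ℝ}

lemma sqrt_le_of_sq {x y : ℝ} (hy : 0 ≤ y) (h : x ≤ y^2) : Real.sqrt x ≤ y := by
  calc Real.sqrt x ≤ Real.sqrt (y^2) := Real.sqrt_le_sqrt h
  _ = y := Real.sqrt_sq hy

lemma f1_le (hf : F1Hyp ℓ ℓ₁ f₁) {t : ℝ} (ht : t ∈ Icc (0:ℝ) 1) : f₁ t ≤ ℓ := by
  have h0 : (0:ℝ) ∈ Icc (0:ℝ) 1 := ⟨le_refl _, zero_le_one⟩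
  have := hf.anti.antitoneOn h0 ht ht.1
  rwa [hf.f10] at this

lemma sqrt_mem_Icc {x : ℝ} (h0 : 0 ≤ x) (h1 : x ≤ 1) : Real.sqrt x ∈ Icc (0:ℝ) 1 :=
  ⟨Real.sqrt_nonneg x, by rw [show (1:ℝ) = Real.sqrt 1 by simp]; exact Real.sqrt_le_sqrt h1⟩

lemma adm_contOn (hA : Admissible γ γ') : ContinuousOn γ (Icc 0 1) := by
  have h := intervalIntegral.continuousOn_primitive (f := γ') (a := (0:ℝ)) (b := 1) (μ := volume) hA.1
  exact h.congr (fun t ht => by rw [hA.2.1 t ht, intervalIntegral.integral_of_le ht.1])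

lemma adm_comp_contOn (hf : F1Hyp ℓ ℓ₁ f₁) (hA : Admissible γ γ') :
    ContinuousOn (fun t => f₁ (Real.sqrt (γ t))) (Icc 0 1) := by
  have h1 : ContinuousOn (fun t => Real.sqrt (γ t)) (Icc 0 1) :=
    Real.continuous_sqrt.comp_continuousOn (adm_contOn hA)
  exact hf.cont.comp h1 (fun t ht => sqrt_mem_Icc (hA.2.2.1 t ht).1 (hA.2.2.1 t ht).2)

lemma integrand_intOn (hf : F1Hyp ℓ ℓ₁ f₁) (hA : Admissible γ γ') (s : ℝ) :
    IntegrableOn (fun t => Real.sqrt (s ^ 2 * (f₁ (Real.sqrt (γ t))) ^ 2 + (γ' t) ^ 2 / 4))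
      (Icc 0 1) volume := by
  have hfc := adm_comp_contOn hf hA
  have h1 : AEStronglyMeasurable (fun t => f₁ (Real.sqrt (γ t))) (volume.restrict (Icc 0 1)) :=
    hfc.aestronglyMeasurable measurableSet_Icc
  have h2 : AEStronglyMeasurable γ' (volume.restrict (Icc 0 1)) := hA.1.aestronglyMeasurable
  have hm : AEStronglyMeasurable
      (fun t => Real.sqrt (s ^ 2 * (f₁ (Real.sqrt (γ t))) ^ 2 + (γ' t) ^ 2 / 4))
      (volume.restrict (Icc 0 1)) := by
    apply Real.continuous_sqrt.comp_aestronglyMeasurable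
    simp only [pow_two, div_eq_mul_inv]
    exact ((h1.mul h1).const_mul (s*s)).add ((h2.mul h2).mul aestronglyMeasurable_const)
  apply Integrable.mono' (g := fun t => |s| * ℓ + |γ' t| / 2)
    ((integrable_const _).add (hA.1.abs.div_const 2)) hm
  filter_upwards [ae_restrict_mem measurableSet_Icc] with t ht
  obtain ⟨hg0, hg1⟩ := hA.2.2.1 t ht
  have ha0 : 0 ≤ f₁ (Real.sqrt (γ t)) := hf.nonneg _ (sqrt_mem_Icc hg0 hg1)
  have ha1 : f₁ (Real.sqrt (γ t)) ≤ ℓ := f1_le hf (sqrt_mem_Icc hg0 hg1)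
  rw [Real.norm_eq_abs, abs_of_nonneg (Real.sqrt_nonneg _)]
  apply sqrt_le_of_sq (add_nonneg (mul_nonneg (abs_nonneg s) hf.hl.le) (by positivity))
  have hF2 : (f₁ (Real.sqrt (γ t)))^2 ≤ ℓ^2 := by nlinarith
  have h3 : s^2 * (f₁ (Real.sqrt (γ t)))^2 ≤ s^2 * ℓ^2 := mul_le_mul_of_nonneg_left hF2 (sq_nonneg s)
  nlinarith [sq_abs s, sq_abs (γ' t), abs_nonneg s, abs_nonneg (γ' t), hf.hl,
    mul_nonneg (mul_nonneg (abs_nonneg s) hf.hl.le) (abs_nonneg (γ' t))]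

lemma energy_eq (s : ℝ) : energy f₁ s γ γ' =
    ∫ t in Ioc (0:ℝ) 1, Real.sqrt (s ^ 2 * (f₁ (Real.sqrt (γ t))) ^ 2 + (γ' t) ^ 2 / 4) :=
  intervalIntegral.integral_of_le zero_le_one

lemma set_nonempty (f₁ : ℝ → ℝ) (s : ℝ) :
    {x | ∃ γ γ' : ℝ → ℝ, Admissible γ γ' ∧ x = energy f₁ s γ γ'}.Nonempty := by
  refine ⟨energy f₁ s (fun _ => 0) (fun _ => 0), (fun _ => 0), (fun _ => 0), ?_, rfl⟩
  refine ⟨by simp [IntegrableOn], by intro t ht; simp, by intro t ht; simp, rfl, rfl⟩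

lemma set_bddBelow (f₁ : ℝ → ℝ) (s : ℝ) :
    BddBelow {x | ∃ γ γ' : ℝ → ℝ, Admissible γ γ' ∧ x = energy f₁ s γ γ'} := by
  refine ⟨0, ?_⟩
  rintro x ⟨γ, γ', hA, rfl⟩
  exact intervalIntegral.integral_nonneg zero_le_one (fun u _ => Real.sqrt_nonneg _)

lemma g0_le (hA : Admissible γ γ') (s : ℝ) : g0 f₁ s ≤ energy f₁ s γ γ' :=
  csInf_le (set_bddBelow f₁ s) ⟨γ, γ', hA, rfl⟩

lemma g0_nonneg (f₁ : ℝ → ℝ) (s : ℝ) : 0 ≤ g0 f₁ s := by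
  apply le_csInf (set_nonempty f₁ s)
  rintro x ⟨γ, γ', hA, rfl⟩
  exact intervalIntegral.integral_nonneg zero_le_one (fun u _ => Real.sqrt_nonneg _)

end SSA

namespace SSA
variable {ℓ ℓ₁ : ℝ} {f₁ : ℝ → ℝ} {γ γ' : ℝ → ℝ}

lemma energy_ratio_mono (hf : F1Hyp ℓ ℓ₁ f₁) (hA : Admissible γ γ') {s s' : ℝ}
    (hs : 0 < s) (hss : s ≤ s') :
    energy f₁ s' γ γ' ≤ (s'/s) * energy f₁ s γ γ' := by
  have hs' : 0 < s' := lt_of_lt_of_le hs hss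
  have hr1 : 1 ≤ s'/s := (one_le_div hs).2 hss
  rw [energy_eq, energy_eq, ← MeasureTheory.integral_const_mul]
  apply setIntegral_mono_on ((integrand_intOn hf hA s').mono_set Ioc_subset_Icc_self)
    (((integrand_intOn hf hA s).mono_set Ioc_subset_Icc_self).const_mul _) measurableSet_Ioc
  intro t ht
  have key : (s'/s) * Real.sqrt (s ^ 2 * (f₁ (Real.sqrt (γ t))) ^ 2 + (γ' t) ^ 2 / 4)
      = Real.sqrt ((s'/s)^2 * (s ^ 2 * (f₁ (Real.sqrt (γ t))) ^ 2 + (γ' t) ^ 2 / 4)) := by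
    rw [Real.sqrt_mul (sq_nonneg _), Real.sqrt_sq (by positivity)]
  rw [key]
  apply Real.sqrt_le_sqrt
  have h1 : (s'/s)^2 * s^2 = s'^2 := by field_simp
  have h2 : (1:ℝ) ≤ (s'/s)^2 := by nlinarith
  nlinarith [sq_nonneg (γ' t), sq_nonneg (f₁ (Real.sqrt (γ t)))]

lemma g0_ratio_mono (hf : F1Hyp ℓ ℓ₁ f₁) {s s' : ℝ} (hs : 0 < s) (hss : s ≤ s') :
    g0 f₁ s' ≤ (s'/s) * g0 f₁ s := by
  have hs' : 0 < s' := lt_of_lt_of_le hs hss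
  apply le_of_forall_pos_le_add
  intro ε' hε'
  obtain ⟨x, hx, hlt⟩ := Real.lt_sInf_add_pos (set_nonempty f₁ s) (show 0 < ε' * s / s' by positivity)
  obtain ⟨γ, γ', hA, rfl⟩ := hx
  calc g0 f₁ s' ≤ energy f₁ s' γ γ' := g0_le hA s'
  _ ≤ (s'/s) * energy f₁ s γ γ' := energy_ratio_mono hf hA hs hss
  _ ≤ (s'/s) * (g0 f₁ s + ε' * s / s') := by
      apply mul_le_mul_of_nonneg_left (le_of_lt hlt) (by positivity)
  _ = (s'/s) * g0 f₁ s + ε' := by field_simp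

end SSA

namespace SSA
variable {ℓ ℓ₁ : ℝ} {f₁ : ℝ → ℝ}

set_option maxHeartbeats 2000000 in
lemma g0_lt_linear (hf : F1Hyp ℓ ℓ₁ f₁) {s : ℝ} (hs : 0 < s) : g0 f₁ s < ℓ * s := by
  have hl := hf.hl
  have hl1 := hf.hl1
  have hπ := Real.pi_pos
  have hπ4 := Real.pi_le_four
  obtain ⟨δ', hδ'pos, hδ'prop⟩ := Metric.tendsto_nhdsWithin_nhds.mp hf.lim0 (ℓ₁/2) (by positivity)
  set r₀ : ℝ := min (δ'/2) 1 with hr₀def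
  have hr₀pos : 0 < r₀ := lt_min (by positivity) one_pos
  set δ : ℝ := min (min 1 (r₀^2)) (min ((ℓ/ℓ₁)^2) (s^2*ℓ*ℓ₁/256)) with hδdef
  have hδpos : 0 < δ :=
    lt_min (lt_min one_pos (by positivity)) (lt_min (by positivity) (by positivity))
  have hδ1 : δ ≤ 1 := le_trans (min_le_left _ _) (min_le_left _ _)
  have hδr₀ : δ ≤ r₀^2 := le_trans (min_le_left _ _) (min_le_right _ _)
  have hδl : δ ≤ (ℓ/ℓ₁)^2 := le_trans (min_le_right _ _) (min_le_left _ _)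
  have hδs : δ ≤ s^2*ℓ*ℓ₁/256 := le_trans (min_le_right _ _) (min_le_right _ _)
  set r : ℝ := Real.sqrt (δ/2) with hrdef
  have hrpos : 0 < r := Real.sqrt_pos.2 (by positivity)
  have hrr₀ : r ≤ r₀ := sqrt_le_of_sq hr₀pos.le (by nlinarith [sq_nonneg r₀])
  have hr1 : r ≤ 1 := le_trans hrr₀ (min_le_right _ _)
  have hrl : (ℓ₁/2)*r ≤ ℓ/2 := by
    have h : r ≤ ℓ/ℓ₁ := sqrt_le_of_sq (by positivity) (by nlinarith)
    calc (ℓ₁/2)*r ≤ (ℓ₁/2)*(ℓ/ℓ₁) := by nlinarith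
    _ = ℓ/2 := by field_simp
  set B : ℝ := ℓ - ℓ₁/2*r with hBdef
  have hB2 : ℓ/2 ≤ B := by simp only [hBdef]; linarith
  have hBpos : 0 < B := lt_of_lt_of_le (by positivity) hB2
  have hf₁r : f₁ r ≤ B := by
    have hd : dist r 0 < δ' := by
      rw [Real.dist_eq, sub_zero, abs_of_pos hrpos]
      calc r ≤ r₀ := hrr₀
      _ ≤ δ'/2 := min_le_left _ _
      _ < δ' := by linarith
    have h := hδ'prop (mem_Ioi.2 hrpos) hd
    rw [Real.dist_eq, sub_zero] at h
    have h2 := (abs_lt.1 h).2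
    have h3 : f₁ r - ℓ + ℓ₁*r < ℓ₁/2*r := by
      have := (div_lt_iff₀ hrpos).1 h2
      linarith
    simp only [hBdef]; linarith
  have hrδ2 : δ/2 ≤ r := by
    have h := Real.sqrt_le_sqrt (show (δ/2)^2 ≤ δ/2 by nlinarith)
    rwa [Real.sqrt_sq (by positivity), ← hrdef] at h
  clear_value r₀ δ r B
  -- the competitor
  set γ : ℝ → ℝ := fun t => δ * Real.sin (Real.pi*t)^2 with hγdef
  set γd : ℝ → ℝ := fun t => δ * (2 * Real.sin (Real.pi*t) ^ 1 * (Real.cos (Real.pi*t) * Real.pi))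
    with hγddef
  have hderiv : ∀ t : ℝ, HasDerivAt γ (γd t) t := by
    intro t
    have h0 : HasDerivAt (fun u : ℝ => Real.pi * u) Real.pi t := by
      simpa using (hasDerivAt_id t).const_mul Real.pi
    have h1 : HasDerivAt (fun u : ℝ => Real.sin (Real.pi*u)) (Real.cos (Real.pi*t) * Real.pi) t :=
      (Real.hasDerivAt_sin (Real.pi*t)).comp t h0
    exact (h1.pow 2).const_mul δ
  have hγdc : Continuous γd := by
    apply continuous_const.mul
    exact (continuous_const.mul ((Real.continuous_sin.comp (continuous_const.mul continuous_id)).pow 1)).mul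
      ((Real.continuous_cos.comp (continuous_const.mul continuous_id)).mul continuous_const)
  have hγc : Continuous γ := by
    exact continuous_const.mul ((Real.continuous_sin.comp (continuous_const.mul continuous_id)).pow 2)
  have hsin2 : ∀ t : ℝ, Real.sin (Real.pi*t)^2 ≤ 1 := fun t => Real.sin_sq_le_one _
  have hA : Admissible γ γd := by
    refine ⟨hγdc.integrableOn_Icc, ?_, ?_, ?_, ?_⟩
    · intro t ht
      rw [intervalIntegral.integral_eq_sub_of_hasDerivAt (fun x _ => hderiv x)
        (hγdc.intervalIntegrable 0 t)]
      simp [hγdef]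
    · intro t ht
      constructor
      · positivity
      · calc δ * Real.sin (Real.pi*t)^2 ≤ δ * 1 := by nlinarith [hsin2 t]
        _ ≤ 1 := by linarith
    · simp [hγdef]
    · simp [hγdef, Real.sin_pi]
  set F : ℝ → ℝ := fun t => Real.sqrt (s ^ 2 * (f₁ (Real.sqrt (γ t))) ^ 2 + (γd t) ^ 2 / 4)
    with hFdef
  have hFc : ContinuousOn F (Icc 0 1) := by
    apply Real.continuous_sqrt.comp_continuousOn
    exact (((adm_comp_contOn hf hA).pow 2).const_smul (s^2)).add
      ((hγdc.continuousOn.pow 2).div_const 4)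
  have hγd_sq : ∀ t : ℝ, (γd t)^2/4 ≤ Real.pi^2*δ^2 := by
    intro t
    have h1 := Real.sin_sq_le_one (Real.pi*t)
    have h2 := Real.cos_sq_le_one (Real.pi*t)
    have h3 : (γd t)^2 = 4*δ^2*Real.pi^2*(Real.sin (Real.pi*t)^2 * Real.cos (Real.pi*t)^2) := by
      simp only [hγddef]; ring
    have h4 : (0:ℝ) ≤ Real.sin (Real.pi*t)^2 * Real.cos (Real.pi*t)^2 := by positivity
    have h5 : Real.sin (Real.pi*t)^2 * Real.cos (Real.pi*t)^2 ≤ 1 := by nlinarith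
    have h6 := mul_le_mul_of_nonneg_left h5 (mul_nonneg (sq_nonneg δ) (sq_nonneg Real.pi))
    linarith [h3, h6]
  have hfb : ∀ t ∈ Icc (0:ℝ) 1, 0 ≤ f₁ (Real.sqrt (γ t)) ∧ f₁ (Real.sqrt (γ t)) ≤ ℓ := by
    intro t ht
    obtain ⟨hg0, hg1⟩ := hA.2.2.1 t ht
    exact ⟨hf.nonneg _ (sqrt_mem_Icc hg0 hg1), f1_le hf (sqrt_mem_Icc hg0 hg1)⟩
  set C₁ : ℝ := Real.sqrt (s^2*ℓ^2 + Real.pi^2*δ^2) with hC₁def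
  set C₂ : ℝ := Real.sqrt (s^2*B^2 + Real.pi^2*δ^2) with hC₂def
  have hFC₁ : ∀ t ∈ Icc (0:ℝ) 1, F t ≤ C₁ := by
    intro t ht
    apply Real.sqrt_le_sqrt
    obtain ⟨h0, h1⟩ := hfb t ht
    have hq : (f₁ (Real.sqrt (γ t)))^2 ≤ ℓ^2 := by nlinarith
    exact add_le_add (mul_le_mul_of_nonneg_left hq (sq_nonneg s)) (hγd_sq t)
  have hFC₂ : ∀ t ∈ Icc (1/4:ℝ) (3/4), F t ≤ C₂ := by
    intro t ht
    have ht' : t ∈ Icc (0:ℝ) 1 := ⟨by linarith [ht.1], by linarith [ht.2]⟩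
    have hcos : Real.cos (2*(Real.pi*t)) ≤ 0 := by
      apply Real.cos_nonpos_of_pi_div_two_le_of_le
      · nlinarith [ht.1]
      · nlinarith [ht.2]
    have hsin : 1/2 ≤ Real.sin (Real.pi*t)^2 := by
      have e1 := Real.sin_sq (Real.pi*t)
      have e2 := Real.cos_sq (Real.pi*t)
      rw [e2] at e1
      linarith
    have hγt : δ/2 ≤ γ t := by
      simp only [hγdef]; nlinarith
    have hrt : r ≤ Real.sqrt (γ t) := by
      rw [hrdef]; exact Real.sqrt_le_sqrt hγt
    obtain ⟨hg0, hg1⟩ := hA.2.2.1 t ht'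
    have hst1 : Real.sqrt (γ t) ∈ Icc (0:ℝ) 1 := sqrt_mem_Icc hg0 hg1
    have hrIcc : r ∈ Icc (0:ℝ) 1 := ⟨hrpos.le, hr1⟩
    have hf₁t : f₁ (Real.sqrt (γ t)) ≤ B :=
      le_trans (hf.anti.antitoneOn hrIcc hst1 hrt) hf₁r
    apply Real.sqrt_le_sqrt
    have h0 := (hfb t ht').1
    have hq : (f₁ (Real.sqrt (γ t)))^2 ≤ B^2 := by nlinarith
    exact add_le_add (mul_le_mul_of_nonneg_left hq (sq_nonneg s)) (hγd_sq t)
  -- split the energy integral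
  have hFi : ∀ a b : ℝ, 0 ≤ a → a ≤ b → b ≤ 1 → IntervalIntegrable F volume a b := by
    intro a b ha hab hb
    apply ContinuousOn.intervalIntegrable
    apply hFc.mono
    rw [uIcc_of_le hab]
    exact fun u hu => ⟨le_trans ha hu.1, le_trans hu.2 hb⟩

  have hsplit : energy f₁ s γ γd =
      (∫ t in (0:ℝ)..(1/4), F t) + ((∫ t in (1/4:ℝ)..(3/4), F t) + ∫ t in (3/4:ℝ)..1, F t) := by
    rw [energy]
    rw [intervalIntegral.integral_add_adjacent_intervals (hFi (1/4) (3/4) (by norm_num) (by norm_num) (by norm_num))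
      (hFi (3/4) 1 (by norm_num) (by norm_num) (by norm_num))]
    rw [intervalIntegral.integral_add_adjacent_intervals (hFi 0 (1/4) (by norm_num) (by norm_num) (by norm_num))
      (hFi (1/4) 1 (by norm_num) (by norm_num) (by norm_num))]
  have hI1 : (∫ t in (0:ℝ)..(1/4), F t) ≤ (1/4)*C₁ := by
    calc (∫ t in (0:ℝ)..(1/4), F t) ≤ ∫ _t in (0:ℝ)..(1/4), C₁ := by
          apply intervalIntegral.integral_mono_on (by norm_num)
            (hFi 0 (1/4) (by norm_num) (by norm_num) (by norm_num)) intervalIntegrable_const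
          intro u hu
          exact hFC₁ u ⟨hu.1, by linarith [hu.2]⟩
    _ = (1/4)*C₁ := by rw [intervalIntegral.integral_const, smul_eq_mul]; norm_num
  have hI3 : (∫ t in (3/4:ℝ)..1, F t) ≤ (1/4)*C₁ := by
    calc (∫ t in (3/4:ℝ)..1, F t) ≤ ∫ _t in (3/4:ℝ)..1, C₁ := by
          apply intervalIntegral.integral_mono_on (by norm_num)
            (hFi (3/4) 1 (by norm_num) (by norm_num) (by norm_num)) intervalIntegrable_const
          intro u hu
          exact hFC₁ u ⟨by linarith [hu.1], hu.2⟩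
    _ = (1/4)*C₁ := by rw [intervalIntegral.integral_const, smul_eq_mul]; norm_num
  have hI2 : (∫ t in (1/4:ℝ)..(3/4), F t) ≤ (1/2)*C₂ := by
    calc (∫ t in (1/4:ℝ)..(3/4), F t) ≤ ∫ _t in (1/4:ℝ)..(3/4), C₂ := by
          apply intervalIntegral.integral_mono_on (by norm_num)
            (hFi (1/4) (3/4) (by norm_num) (by norm_num) (by norm_num)) intervalIntegrable_const
          exact fun u hu => hFC₂ u hu
    _ = (1/2)*C₂ := by rw [intervalIntegral.integral_const, smul_eq_mul]; norm_num
  have hsl : 0 < s*ℓ := by positivity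
  have hC₁b : C₁ ≤ s*ℓ + Real.pi^2*δ^2/(s*ℓ) := by
    rw [hC₁def]
    apply sqrt_le_of_sq (by positivity)
    have hcancel : 2*(s*ℓ)*(Real.pi^2*δ^2/(s*ℓ)) = 2*(Real.pi^2*δ^2) := by field_simp
    nlinarith [sq_nonneg (Real.pi^2*δ^2/(s*ℓ))]
  have hC₂b : C₂ ≤ s*B + Real.pi^2*δ^2/(s*ℓ) := by
    rw [hC₂def]
    apply sqrt_le_of_sq (by positivity)
    have hcancel : 2*(s*B)*(Real.pi^2*δ^2/(s*ℓ)) = 2*B/ℓ*(Real.pi^2*δ^2) := by field_simp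
    have h2B : 1 ≤ 2*B/ℓ := by rw [le_div_iff₀ hl]; linarith
    nlinarith [sq_nonneg (Real.pi^2*δ^2/(s*ℓ)), sq_nonneg Real.pi, sq_nonneg δ,
      mul_nonneg (sq_nonneg Real.pi) (sq_nonneg δ)]
  have henergy : energy f₁ s γ γd ≤ s*ℓ - s*ℓ₁/4*r + Real.pi^2*δ^2/(s*ℓ) := by
    rw [hsplit]
    have : (1/4)*C₁ + ((1/2)*C₂ + (1/4)*C₁) ≤ s*ℓ - s*ℓ₁/4*r + Real.pi^2*δ^2/(s*ℓ) := by
      have hBexp : (1/2)*(s*B) = s*ℓ/2 - s*ℓ₁/4*r := by simp only [hBdef]; ring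
      nlinarith
    linarith [hI1, hI2, hI3]
  have hfinal : Real.pi^2*δ^2/(s*ℓ) < s*ℓ₁/4*r := by
    have hrδ : δ/2 ≤ r := hrδ2
    have h16 : Real.pi^2 ≤ 16 := by nlinarith
    have hd128 : 128*δ < s^2*ℓ*ℓ₁ := by nlinarith
    calc Real.pi^2*δ^2/(s*ℓ) ≤ 16*δ^2/(s*ℓ) := by
          gcongr
    _ < s*ℓ₁/4*(δ/2) := by
          rw [div_lt_iff₀ hsl]; nlinarith
    _ ≤ s*ℓ₁/4*r := by nlinarith
  calc g0 f₁ s ≤ energy f₁ s γ γd := g0_le hA s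
  _ ≤ s*ℓ - s*ℓ₁/4*r + Real.pi^2*δ^2/(s*ℓ) := henergy
  _ < s*ℓ := by linarith
  _ = ℓ*s := mul_comm s ℓ

end SSA

namespace SSA
variable {ℓ ℓ₁ : ℝ} {f₁ : ℝ → ℝ} {γ γ' : ℝ → ℝ}

lemma scaled_pt {s a b : ℝ} (hs : 0 < s) :
    Real.sqrt (s^2*a^2 + b^2/4) / s = Real.sqrt (a^2 + (|b|/(2*s))^2) := by
  have h : s^2*a^2 + b^2/4 = s^2*(a^2 + (|b|/(2*s))^2) := by
    have hb : |b|^2 = b^2 := sq_abs b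
    field_simp
    nlinarith [hb]
  rw [h, Real.sqrt_mul (sq_nonneg s), Real.sqrt_sq hs.le]
  field_simp

lemma gain_pt {l a x rr : ℝ} (hl : 0 < l) (ha0 : 0 ≤ a) (hal : a ≤ l)
    (hx : 0 ≤ x) (hr0 : 0 ≤ rr) (hr1 : rr ≤ 1) :
    (1 - rr^2) * x^2 / (2*(l + x)) ≤ Real.sqrt (a^2 + x^2) - Real.sqrt (a^2 + (rr*x)^2) := by
  rcases eq_or_lt_of_le hx with h | hxpos
  · rw [← h]; simp
  · set u := Real.sqrt (a^2 + x^2) with hu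
    set v := Real.sqrt (a^2 + (rr*x)^2) with hv
    have hu2 : u^2 = a^2 + x^2 := Real.sq_sqrt (by positivity)
    have hv2 : v^2 = a^2 + (rr*x)^2 := Real.sq_sqrt (by positivity)
    have hux : x ≤ u := by
      rw [hu]
      have h2 := Real.sqrt_le_sqrt (show x^2 ≤ a^2 + x^2 by nlinarith)
      rwa [Real.sqrt_sq hx] at h2
    have hvnn : 0 ≤ v := Real.sqrt_nonneg _
    have huv : 0 < u + v := by linarith
    have hub : u ≤ l + x := by
      rw [hu]; exact sqrt_le_of_sq (by linarith) (by nlinarith)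
    have hvb : v ≤ l + x := by
      rw [hv]; apply sqrt_le_of_sq (by linarith)
      have hr2 : rr^2 ≤ 1 := by nlinarith
      have h4 : (rr*x)^2 ≤ x^2 := by nlinarith [sq_nonneg x]
      have h5 : a^2 ≤ l^2 := by nlinarith
      nlinarith [mul_nonneg hl.le hx]
    have hdiff : (u - v) * (u + v) = (1 - rr^2)*x^2 := by
      have h3 : u^2 - v^2 = (1-rr^2)*x^2 := by rw [hu2, hv2]; ring
      linear_combination h3
    have heq : u - v = (1 - rr^2)*x^2 / (u+v) := by
      rw [eq_div_iff huv.ne']; exact hdiff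
    rw [heq]
    apply div_le_div_of_nonneg_left ?_ huv (by linarith)
    have : 0 ≤ 1 - rr^2 := by nlinarith
    positivity

lemma amgm_integral {l : ℝ} (hl : 0 < l) {x : ℝ → ℝ}
    (hxi : IntegrableOn x (Ioc (0:ℝ) 1))
    (hx0 : ∀ t ∈ Ioc (0:ℝ) 1, 0 ≤ x t)
    (hφi : IntegrableOn (fun t => (x t)^2/(l + x t)) (Ioc (0:ℝ) 1))
    (hX : 0 < ∫ t in Ioc (0:ℝ) 1, x t) :
    (∫ t in Ioc (0:ℝ) 1, x t)^2 / (l + ∫ t in Ioc (0:ℝ) 1, x t)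
      ≤ ∫ t in Ioc (0:ℝ) 1, (x t)^2/(l + x t) := by
  set X := ∫ t in Ioc (0:ℝ) 1, x t with hXdef
  set lam := (l + X)/X with hlamdef
  have hlX : 0 < l + X := by linarith
  have hlam : 0 < lam := div_pos hlX hX
  have hconsti : IntegrableOn (fun _ : ℝ => l) (Ioc (0:ℝ) 1) :=
    integrableOn_const (by rw [Real.volume_Ioc]; exact ENNReal.ofReal_ne_top)
  have hpt : ∀ t ∈ Ioc (0:ℝ) 1, 2 * x t ≤ lam * ((x t)^2/(l + x t)) + (l + x t)/lam := by
    intro t ht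
    have hxt := hx0 t ht
    have hlx : 0 < l + x t := by linarith
    have key : lam * ((x t)^2/(l + x t)) + (l + x t)/lam - 2 * x t
        = (lam * x t - (l + x t))^2/(lam*(l + x t)) := by field_simp; ring
    have hnn : 0 ≤ (lam * x t - (l + x t))^2/(lam*(l + x t)) :=
      div_nonneg (sq_nonneg _) (mul_pos hlam hlx).le
    linarith [key ▸ hnn]
  have hsumi : IntegrableOn (fun t : ℝ => l + x t) (Ioc (0:ℝ) 1) := hconsti.add hxi
  have hsumdi : IntegrableOn (fun t : ℝ => (l + x t)/lam) (Ioc (0:ℝ) 1) := hsumi.div_const lam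
  have hφli : IntegrableOn (fun t : ℝ => lam * ((x t)^2/(l + x t))) (Ioc (0:ℝ) 1) :=
    hφi.const_mul lam
  have hint : 2 * X ≤ lam * (∫ t in Ioc (0:ℝ) 1, (x t)^2/(l + x t)) + (l + X)/lam := by
    have h1 : (∫ t in Ioc (0:ℝ) 1, 2 * x t) ≤
        ∫ t in Ioc (0:ℝ) 1, (lam * ((x t)^2/(l + x t)) + (l + x t)/lam) := by
      apply setIntegral_mono_on (hxi.const_mul 2) (hφli.add hsumdi) measurableSet_Ioc hpt
    rw [MeasureTheory.integral_const_mul] at h1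
    rw [MeasureTheory.integral_add hφli hsumdi] at h1
    rw [MeasureTheory.integral_const_mul, integral_div,
      MeasureTheory.integral_add hconsti hxi] at h1
    rw [setIntegral_const, measureReal_def, Real.volume_Ioc, smul_eq_mul] at h1
    norm_num at h1
    linarith [h1]
  have hlamX : (l + X)/lam = X := by rw [hlamdef]; field_simp
  have h2 : X ≤ lam * ∫ t in Ioc (0:ℝ) 1, (x t)^2/(l + x t) := by
    rw [hlamX] at hint; linarith
  have h3 : X/lam = X^2/(l + X) := by rw [hlamdef]; field_simp
  rw [← h3, div_le_iff₀ hlam]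
  linarith [h2]

lemma abs_deriv_lb (hA : Admissible γ γ') {t₀ : ℝ} (ht₀ : t₀ ∈ Icc (0:ℝ) 1) :
    2 * γ t₀ ≤ ∫ t in Ioc (0:ℝ) 1, |γ' t| := by
  have hi : ∀ a b : ℝ, 0 ≤ a → a ≤ b → b ≤ 1 → IntervalIntegrable γ' volume a b := by
    intro a b ha hab hb
    apply IntegrableOn.intervalIntegrable
    rw [uIcc_of_le hab]
    exact hA.1.mono_set (Icc_subset_Icc ha hb)
  have hiabs : ∀ a b : ℝ, 0 ≤ a → a ≤ b → b ≤ 1 → IntervalIntegrable (fun t => |γ' t|) volume a b := by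
    intro a b ha hab hb
    apply IntegrableOn.intervalIntegrable
    rw [uIcc_of_le hab]
    have habs : IntegrableOn (fun t => |γ' t|) (Icc (0:ℝ) 1) volume := hA.1.abs
    exact habs.mono_set (Icc_subset_Icc ha hb)
  have h1 : γ t₀ = ∫ u in (0:ℝ)..t₀, γ' u := hA.2.1 t₀ ht₀
  have hsum : (∫ u in (0:ℝ)..t₀, γ' u) + ∫ u in t₀..1, γ' u = 0 := by
    rw [intervalIntegral.integral_add_adjacent_intervals (hi 0 t₀ le_rfl ht₀.1 ht₀.2)
      (hi t₀ 1 ht₀.1 ht₀.2 le_rfl)]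
    rw [← hA.2.1 1 ⟨zero_le_one, le_refl 1⟩]
    exact hA.2.2.2.2
  have h2 : γ t₀ ≤ ∫ u in (0:ℝ)..t₀, |γ' u| := by
    rw [h1]
    calc (∫ u in (0:ℝ)..t₀, γ' u) ≤ |∫ u in (0:ℝ)..t₀, γ' u| := le_abs_self _
    _ ≤ ∫ u in (0:ℝ)..t₀, |γ' u| := intervalIntegral.abs_integral_le_integral_abs ht₀.1
  have h3 : γ t₀ ≤ ∫ u in t₀..1, |γ' u| := by
    have hneg : γ t₀ = -∫ u in t₀..1, γ' u := by rw [h1]; linarith [hsum]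
    rw [hneg]
    calc -(∫ u in t₀..1, γ' u) ≤ |∫ u in t₀..1, γ' u| := neg_le_abs _
    _ ≤ ∫ u in t₀..1, |γ' u| := intervalIntegral.abs_integral_le_integral_abs ht₀.2
  have h4 : (∫ u in (0:ℝ)..t₀, |γ' u|) + ∫ u in t₀..1, |γ' u| = ∫ t in Ioc (0:ℝ) 1, |γ' t| := by
    rw [intervalIntegral.integral_add_adjacent_intervals (hiabs 0 t₀ le_rfl ht₀.1 ht₀.2)
      (hiabs t₀ 1 ht₀.1 ht₀.2 le_rfl)]
    exact intervalIntegral.integral_of_le zero_le_one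
  linarith

end SSA

namespace SSA
variable {ℓ ℓ₁ : ℝ} {f₁ : ℝ → ℝ}

set_option maxHeartbeats 2000000 in
lemma exists_gap (hf : F1Hyp ℓ ℓ₁ f₁) {s₁ S : ℝ} (h₁ : 0 < s₁) (hS : s₁ < S) :
    ∃ δ > 0, g0 f₁ S ≤ (S/s₁) * g0 f₁ s₁ - δ := by
  have hSpos : 0 < S := lt_trans h₁ hS
  have hl := hf.hl
  have hg0lt : g0 f₁ s₁ < ℓ * s₁ := g0_lt_linear hf h₁
  set η := (ℓ*s₁ - g0 f₁ s₁)/(2*s₁) with hηdef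
  have hη : 0 < η := div_pos (by linarith) (by linarith)
  obtain ⟨d, hd, hdp⟩ := Metric.continuousWithinAt_iff.1
    (hf.cont 0 ⟨le_refl 0, zero_le_one⟩) η hη
  set m := min 1 ((d/2)^2) with hmdef
  have hm : 0 < m := lt_min one_pos (by positivity)
  have hm1 : m ≤ 1 := min_le_left _ _
  have hfm : ∀ u : ℝ, 0 ≤ u → u ≤ m → ℓ - η ≤ f₁ (Real.sqrt u) := by
    intro u h0u h1u
    have hx : Real.sqrt u ∈ Icc (0:ℝ) 1 := sqrt_mem_Icc h0u (le_trans h1u hm1)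
    have hdist : dist (Real.sqrt u) 0 < d := by
      rw [Real.dist_eq, sub_zero, abs_of_nonneg (Real.sqrt_nonneg u)]
      have h2 : Real.sqrt u ≤ d/2 := sqrt_le_of_sq (by positivity)
        (le_trans h1u (min_le_right _ _))
      linarith
    have h3 := hdp hx hdist
    rw [Real.dist_eq, hf.f10] at h3
    linarith [(abs_lt.1 h3).1]
  clear_value m η
  set rr := s₁/S with hrrdef
  have hrr0 : 0 ≤ rr := by positivity
  have hrrlt : rr < 1 := by rw [hrrdef, div_lt_one hSpos]; exact hS
  have hθ : 0 < 1 - rr^2 := by nlinarith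
  set X₀ := m/s₁ with hX₀def
  have hX₀ : 0 < X₀ := by positivity
  set G₀ := (1 - rr^2)/2 * (X₀^2/(ℓ + X₀)) with hG₀def
  have hG₀ : 0 < G₀ :=
    mul_pos (by positivity) (div_pos (by positivity) (by linarith))
  clear_value X₀
  set ε := min (s₁*η/2) (s₁*G₀/2) with hεdef
  have hε : 0 < ε := lt_min (by positivity) (by positivity)
  refine ⟨S*G₀/2, by positivity, ?_⟩
  obtain ⟨xx, hxx, hlt⟩ := Real.lt_sInf_add_pos (set_nonempty f₁ s₁) hε
  obtain ⟨γ, γ', hA, rfl⟩ := hxx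
  have hlt' : energy f₁ s₁ γ γ' < g0 f₁ s₁ + ε := hlt
  by_cases hcase : ∀ t ∈ Icc (0:ℝ) 1, γ t ≤ m
  · exfalso
    have hlow : s₁*(ℓ - η) ≤ energy f₁ s₁ γ γ' := by
      rw [energy_eq]
      have hconst : s₁*(ℓ-η) = ∫ _t in Ioc (0:ℝ) 1, s₁*(ℓ-η) := by
        rw [setIntegral_const, measureReal_def, Real.volume_Ioc, smul_eq_mul]
        norm_num
      rw [hconst]
      apply setIntegral_mono_on
        (integrableOn_const (by rw [Real.volume_Ioc]; exact ENNReal.ofReal_ne_top))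
        ((integrand_intOn hf hA s₁).mono_set Ioc_subset_Icc_self) measurableSet_Ioc
      intro t ht
      have ht' : t ∈ Icc (0:ℝ) 1 := Ioc_subset_Icc_self ht
      obtain ⟨hg0t, hg1t⟩ := hA.2.2.1 t ht'
      have hfm' : ℓ - η ≤ f₁ (Real.sqrt (γ t)) := hfm (γ t) hg0t (hcase t ht')
      have hfnn : 0 ≤ f₁ (Real.sqrt (γ t)) := hf.nonneg _ (sqrt_mem_Icc hg0t hg1t)
      calc s₁*(ℓ-η) ≤ s₁ * f₁ (Real.sqrt (γ t)) := mul_le_mul_of_nonneg_left hfm' h₁.le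
      _ ≤ Real.sqrt (s₁^2*(f₁ (Real.sqrt (γ t)))^2 + (γ' t)^2/4) := by
          rw [show s₁ * f₁ (Real.sqrt (γ t)) =
            Real.sqrt ((s₁ * f₁ (Real.sqrt (γ t)))^2) by rw [Real.sqrt_sq (by positivity)]]
          apply Real.sqrt_le_sqrt
          nlinarith [sq_nonneg (γ' t)]
    have h2η : s₁*(ℓ - η) = g0 f₁ s₁ + s₁*η := by rw [hηdef]; field_simp; ring
    have hεs : ε ≤ s₁*η/2 := min_le_left _ _
    linarith
  · push_neg at hcase
    obtain ⟨t₀, ht₀, hmlt⟩ := hcase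
    have hxi : IntegrableOn (fun t => |γ' t|/(2*s₁)) (Ioc (0:ℝ) 1) := by
      have habs : IntegrableOn (fun t => |γ' t|) (Icc (0:ℝ) 1) volume := hA.1.abs
      have hdivi : IntegrableOn (fun t => |γ' t|/(2*s₁)) (Icc (0:ℝ) 1) volume :=
        habs.div_const (2*s₁)
      exact hdivi.mono_set Ioc_subset_Icc_self
    set X := ∫ t in Ioc (0:ℝ) 1, |γ' t|/(2*s₁) with hXdef
    have hx0 : ∀ t ∈ Ioc (0:ℝ) 1, (0:ℝ) ≤ |γ' t|/(2*s₁) := fun t _ => by positivity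
    have hXlb : X₀ ≤ X := by
      have h2m := abs_deriv_lb hA ht₀
      have hXalt : X = (∫ t in Ioc (0:ℝ) 1, |γ' t|)/(2*s₁) := by
        rw [hXdef, integral_div]
      rw [hXalt, hX₀def, le_div_iff₀ (by positivity)]
      calc m/s₁*(2*s₁) = 2*m := by field_simp
      _ ≤ 2 * γ t₀ := by linarith
      _ ≤ _ := h2m
    have hXpos : 0 < X := lt_of_lt_of_le hX₀ hXlb
    have hφm : AEStronglyMeasurable (fun t => (|γ' t|/(2*s₁))^2/(ℓ + |γ' t|/(2*s₁)))
        (volume.restrict (Ioc (0:ℝ) 1)) := by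
      have hxm : AEMeasurable (fun t => |γ' t|/(2*s₁)) (volume.restrict (Ioc (0:ℝ) 1)) :=
        hxi.aemeasurable
      exact ((hxm.pow_const 2).div (aemeasurable_const.add hxm)).aestronglyMeasurable
    have hφi : IntegrableOn (fun t => (|γ' t|/(2*s₁))^2/(ℓ + |γ' t|/(2*s₁))) (Ioc (0:ℝ) 1) := by
      apply Integrable.mono' hxi hφm
      filter_upwards [ae_restrict_mem measurableSet_Ioc] with t ht
      have hxt := hx0 t ht
      have hlx : (0:ℝ) < ℓ + |γ' t|/(2*s₁) := by linarith
      rw [Real.norm_eq_abs, abs_of_nonneg (by positivity)]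
      rw [div_le_iff₀ hlx]
      nlinarith
    -- pointwise gain
    have hIs1 : IntegrableOn
        (fun t => Real.sqrt (s₁^2*(f₁ (Real.sqrt (γ t)))^2 + (γ' t)^2/4)) (Ioc (0:ℝ) 1) :=
      (integrand_intOn hf hA s₁).mono_set Ioc_subset_Icc_self
    have hIS : IntegrableOn
        (fun t => Real.sqrt (S^2*(f₁ (Real.sqrt (γ t)))^2 + (γ' t)^2/4)) (Ioc (0:ℝ) 1) :=
      (integrand_intOn hf hA S).mono_set Ioc_subset_Icc_self
    have hptw : ∀ t ∈ Ioc (0:ℝ) 1, (1 - rr^2)/2 * ((|γ' t|/(2*s₁))^2/(ℓ + |γ' t|/(2*s₁))) ≤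
        Real.sqrt (s₁^2*(f₁ (Real.sqrt (γ t)))^2 + (γ' t)^2/4)/s₁
          - Real.sqrt (S^2*(f₁ (Real.sqrt (γ t)))^2 + (γ' t)^2/4)/S := by
      intro t ht
      have ht' : t ∈ Icc (0:ℝ) 1 := Ioc_subset_Icc_self ht
      obtain ⟨hg0t, hg1t⟩ := hA.2.2.1 t ht'
      have ha0 : 0 ≤ f₁ (Real.sqrt (γ t)) := hf.nonneg _ (sqrt_mem_Icc hg0t hg1t)
      have hal : f₁ (Real.sqrt (γ t)) ≤ ℓ := f1_le hf (sqrt_mem_Icc hg0t hg1t)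
      rw [scaled_pt h₁, scaled_pt hSpos]
      have hxx2 : |γ' t|/(2*S) = rr * (|γ' t|/(2*s₁)) := by
        rw [hrrdef]; field_simp
      rw [hxx2]
      have hgp := gain_pt hl ha0 hal (show 0 ≤ |γ' t|/(2*s₁) by positivity) hrr0 hrrlt.le
      have hlx : (0:ℝ) < ℓ + |γ' t|/(2*s₁) :=
        add_pos_of_pos_of_nonneg hl (by positivity)
      calc (1 - rr^2)/2 * ((|γ' t|/(2*s₁))^2/(ℓ + |γ' t|/(2*s₁)))
            = (1 - rr^2) * (|γ' t|/(2*s₁))^2 / (2*(ℓ + |γ' t|/(2*s₁))) := by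
            field_simp
      _ ≤ _ := hgp
    -- integrate the gain
    have hgainint : (1 - rr^2)/2 *
        (∫ t in Ioc (0:ℝ) 1, (|γ' t|/(2*s₁))^2/(ℓ + |γ' t|/(2*s₁))) ≤
        energy f₁ s₁ γ γ'/s₁ - energy f₁ S γ γ'/S := by
      have h1 : (∫ t in Ioc (0:ℝ) 1, (1 - rr^2)/2 * ((|γ' t|/(2*s₁))^2/(ℓ + |γ' t|/(2*s₁)))) ≤
          ∫ t in Ioc (0:ℝ) 1,
            (Real.sqrt (s₁^2*(f₁ (Real.sqrt (γ t)))^2 + (γ' t)^2/4)/s₁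
              - Real.sqrt (S^2*(f₁ (Real.sqrt (γ t)))^2 + (γ' t)^2/4)/S) := by
        exact setIntegral_mono_on (hφi.const_mul _)
          ((hIs1.div_const s₁).sub (hIS.div_const S)) measurableSet_Ioc hptw
      rw [MeasureTheory.integral_const_mul] at h1
      rw [MeasureTheory.integral_sub (hIs1.div_const s₁) (hIS.div_const S)] at h1
      rw [integral_div, integral_div] at h1
      rw [energy_eq, energy_eq]
      exact h1
    have hamgm : X^2/(ℓ + X) ≤
        ∫ t in Ioc (0:ℝ) 1, (|γ' t|/(2*s₁))^2/(ℓ + |γ' t|/(2*s₁)) := by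
      rw [hXdef]
      exact amgm_integral hl hxi hx0 hφi (by rw [← hXdef]; exact hXpos)
    have hXmono : X₀^2/(ℓ + X₀) ≤ X^2/(ℓ + X) := by
      rw [div_le_div_iff₀ (by linarith) (by linarith)]
      have k1 : 0 ≤ ℓ*((X - X₀)*(X + X₀)) :=
        mul_nonneg hl.le (mul_nonneg (by linarith) (by linarith))
      have k2 : 0 ≤ (X*X₀)*(X - X₀) :=
        mul_nonneg (mul_nonneg hXpos.le hX₀.le) (by linarith)
      nlinarith [k1, k2]
    have hG₀X : G₀ ≤ (1 - rr^2)/2 *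
        (∫ t in Ioc (0:ℝ) 1, (|γ' t|/(2*s₁))^2/(ℓ + |γ' t|/(2*s₁))) := by
      rw [hG₀def]
      calc (1 - rr^2)/2 * (X₀^2/(ℓ + X₀)) ≤ (1 - rr^2)/2 * (X^2/(ℓ + X)) :=
            mul_le_mul_of_nonneg_left hXmono (by positivity)
      _ ≤ _ := mul_le_mul_of_nonneg_left hamgm (by positivity)
    have hfinal : energy f₁ S γ γ'/S ≤ (g0 f₁ s₁ + ε)/s₁ - G₀ := by
      have hdiv : energy f₁ s₁ γ γ'/s₁ ≤ (g0 f₁ s₁ + ε)/s₁ :=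
        (div_le_div_iff_of_pos_right h₁).2 hlt'.le
      linarith
    have hεs : ε ≤ s₁*G₀/2 := min_le_right _ _
    calc g0 f₁ S ≤ energy f₁ S γ γ' := g0_le hA S
    _ = S * (energy f₁ S γ γ'/S) := by field_simp
    _ ≤ S * ((g0 f₁ s₁ + ε)/s₁ - G₀) := mul_le_mul_of_nonneg_left hfinal hSpos.le
    _ ≤ (S/s₁) * g0 f₁ s₁ - S*G₀/2 := by
        have hexp : S*((g0 f₁ s₁ + ε)/s₁) = (S/s₁)*(g0 f₁ s₁) + (S/s₁)*ε := by
          field_simp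
        have h2 : (S/s₁)*ε ≤ S*G₀/2 := by
          calc (S/s₁)*ε ≤ (S/s₁)*(s₁*G₀/2) := mul_le_mul_of_nonneg_left hεs (by positivity)
          _ = S*G₀/2 := by field_simp
        rw [mul_sub, hexp]
        linarith

end SSA


/-- `g₀` is strictly subadditive on `(0,∞)`. -/
theorem stmt_3 (ℓ ℓ₁ : ℝ) (f₁ : ℝ → ℝ) (hf : F1Hyp ℓ ℓ₁ f₁)
    (s₁ s₂ : ℝ) (h₁ : 0 < s₁) (h₂ : 0 < s₂) :
    g0 f₁ (s₁ + s₂) < g0 f₁ s₁ + g0 f₁ s₂ := by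
  set S := s₁ + s₂ with hSdef
  have hSpos : 0 < S := by positivity
  have hS₁ : s₁ < S := by rw [hSdef]; linarith
  have hS₂ : s₂ ≤ S := by rw [hSdef]; linarith
  obtain ⟨δ, hδ, h3⟩ := SSA.exists_gap hf h₁ hS₁
  have h4 : g0 f₁ S ≤ (S/s₂) * g0 f₁ s₂ := SSA.g0_ratio_mono hf h₂ hS₂
  have e1 : g0 f₁ S = (s₁/S) * g0 f₁ S + (s₂/S) * g0 f₁ S := by
    field_simp
    ring
  have e2 : (s₁/S) * g0 f₁ S ≤ (s₁/S) * ((S/s₁) * g0 f₁ s₁ - δ) :=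
    mul_le_mul_of_nonneg_left h3 (by positivity)
  have e3 : (s₂/S) * g0 f₁ S ≤ (s₂/S) * ((S/s₂) * g0 f₁ s₂) :=
    mul_le_mul_of_nonneg_left h4 (by positivity)
  have e4 : (s₁/S) * ((S/s₁) * g0 f₁ s₁ - δ) = g0 f₁ s₁ - (s₁/S)*δ := by
    field_simp
  have e5 : (s₂/S) * ((S/s₂) * g0 f₁ s₂) = g0 f₁ s₂ := by
    field_simp
  have e6 : 0 < (s₁/S)*δ := by positivity
  calc g0 f₁ S = (s₁/S) * g0 f₁ S + (s₂/S) * g0 f₁ S := e1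
  _ ≤ (g0 f₁ s₁ - (s₁/S)*δ) + g0 f₁ s₂ := by rw [← e4, ← e5]; exact add_le_add e2 e3
  _ < g0 f₁ s₁ + g0 f₁ s₂ := by linarith
end

section
/- For every s > 0, g₀(s) < ℓ·s. -/
open MeasureTheory Set Filter

set_option maxHeartbeats 1000000 in
/-- for every `s > 0`, `g₀(s) < ℓ s`. -/
theorem stmt_4 (ℓ ℓ₁ : ℝ) (f₁ : ℝ → ℝ) (hf : F1Hyp ℓ ℓ₁ f₁)
    (s : ℝ) (hs : 0 < s) :
    g0 f₁ s < ℓ * s := by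
  obtain ⟨δ, hδ, hδ2⟩ := Metric.tendsto_nhdsWithin_nhds.mp hf.lim0 (ℓ₁/2) (by
    have := hf.hl1; positivity)
  have hl1 := hf.hl1
  set m : ℝ := min δ (min 1 (s*ℓ₁/16)) / 2 with hm
  have hmin0 : 0 < min δ (min 1 (s*ℓ₁/16)) := lt_min hδ (lt_min one_pos (by positivity))
  have hm0 : 0 < m := by positivity
  have hmδ : m < δ := by
    have h1 : min δ (min 1 (s*ℓ₁/16)) ≤ δ := min_le_left _ _
    rw [hm]; linarith
  have hm1 : m ≤ 1 := by
    have h1 : min δ (min 1 (s*ℓ₁/16)) ≤ 1 := le_trans (min_le_right _ _) (min_le_left _ _)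
    rw [hm]; linarith
  have hms : m < s*ℓ₁/12 := by
    have h1 : min δ (min 1 (s*ℓ₁/16)) ≤ s*ℓ₁/16 :=
      le_trans (min_le_right _ _) (min_le_right _ _)
    have h2 : 0 < s*ℓ₁ := by positivity
    rw [hm]; nlinarith
  -- key consequence of the limit hypothesis
  have hkey : ∀ r : ℝ, 0 < r → r < δ → f₁ r ≤ ℓ - ℓ₁/2 * r := by
    intro r hr hrδ
    have hd : dist r 0 < δ := by
      rw [Real.dist_eq, sub_zero, abs_of_pos hr]; exact hrδ
    have := hδ2 (mem_Ioi.mpr hr) hd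
    rw [Real.dist_eq, sub_zero] at this
    have h1 : (f₁ r - ℓ + ℓ₁ * r)/r < ℓ₁/2 := lt_of_le_of_lt (le_abs_self _) this
    have h2 : f₁ r - ℓ + ℓ₁ * r < ℓ₁/2 * r := (div_lt_iff₀ hr).mp h1
    linarith
  -- the competitor
  set γ : ℝ → ℝ := fun t => 4*m^2*(t - t^2) with hγdef
  set γ' : ℝ → ℝ := fun t => 4*m^2*(1 - 2*t) with hγ'def
  have hderiv : ∀ t : ℝ, HasDerivAt γ (γ' t) t := by
    intro t
    have h1 : HasDerivAt (fun t : ℝ => t - t^2) (1 - 2*t) t := by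
      simpa using (hasDerivAt_id t).fun_sub (hasDerivAt_pow 2 t)
    simpa [γ, γ'] using h1.const_mul (4*m^2)
  have hγcont : Continuous γ := by fun_prop
  have hγ'cont : Continuous γ' := by fun_prop
  have hγbounds : ∀ t ∈ Icc (0:ℝ) 1, 0 ≤ γ t ∧ γ t ≤ m^2 := by
    intro t ht
    obtain ⟨ht0, ht1⟩ := ht
    constructor
    · have : 0 ≤ t - t^2 := by nlinarith
      positivity
    · simp only [hγdef]; nlinarith [sq_nonneg (m*(2*t-1))]
  have hadm : Admissible γ γ' := by
    refine ⟨hγ'cont.integrableOn_Icc, ?_, ?_, by simp [hγdef], by simp [hγdef]⟩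
    · intro t _
      rw [intervalIntegral.integral_eq_sub_of_hasDerivAt (fun u _ => hderiv u)
        (hγ'cont.intervalIntegrable 0 t)]
      simp [hγdef]
    · intro t ht
      obtain ⟨h0, h1⟩ := hγbounds t ht
      exact ⟨h0, h1.trans (by nlinarith)⟩
  have hsq : ∀ t ∈ Icc (0:ℝ) 1, Real.sqrt (γ t) ∈ Icc (0:ℝ) 1 := by
    intro t ht
    refine ⟨Real.sqrt_nonneg _, ?_⟩
    have h1 : γ t ≤ 1 := (hγbounds t ht).2.trans (by nlinarith)
    exact Real.sqrt_le_one.mpr h1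
  -- pointwise bound on the integrand
  have hpt : ∀ t ∈ Icc (0:ℝ) 1,
      Real.sqrt (s ^ 2 * (f₁ (Real.sqrt (γ t))) ^ 2 + (γ' t) ^ 2 / 4)
        ≤ s*(ℓ - ℓ₁*m*(t - t^2)) + 2*m^2 := by
    intro t ht
    obtain ⟨ht0, ht1⟩ := ht
    set r := Real.sqrt (γ t) with hrdef
    have hr0 : 0 ≤ r := Real.sqrt_nonneg _
    have htt0 : 0 ≤ t - t^2 := by nlinarith
    have hγle : γ t ≤ m^2 := (hγbounds t ⟨ht0, ht1⟩).2
    have hrm : r ≤ m := by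
      calc r ≤ Real.sqrt (m^2) := Real.sqrt_le_sqrt hγle
        _ = m := Real.sqrt_sq hm0.le
    have hrl : 2*m*(t - t^2) ≤ r := by
      have h1 : (2*m*(t - t^2))^2 ≤ γ t := by
        have htt4 : t - t^2 ≤ 1 := by nlinarith
        have hp : 0 ≤ (m*m) * ((t - t^2) * (1 - (t - t^2))) :=
          mul_nonneg (mul_nonneg hm0.le hm0.le) (mul_nonneg htt0 (by linarith))
        simp only [hγdef]; nlinarith [hp]
      calc 2*m*(t - t^2) = Real.sqrt ((2*m*(t - t^2))^2) :=
            (Real.sqrt_sq (by positivity)).symm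
        _ ≤ r := Real.sqrt_le_sqrt h1
    have hfr : f₁ r ≤ ℓ - ℓ₁*m*(t - t^2) := by
      rcases eq_or_lt_of_le hr0 with h0 | hpos
      · have htt : t - t^2 = 0 := by nlinarith [hrl, h0]
        rw [← h0, hf.f10, htt]; simp
      · have h1 := hkey r hpos (lt_of_le_of_lt hrm hmδ)
        nlinarith [hrl]
    have hfpos : 0 ≤ f₁ r := hf.nonneg r ⟨hr0, hrm.trans hm1⟩
    have hγ'b : |γ' t| ≤ 4*m^2 := by
      have h1 : |(1:ℝ) - 2*t| ≤ 1 := abs_le.mpr ⟨by linarith, by linarith⟩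
      calc |γ' t| = |4*m^2| * |1 - 2*t| := by rw [← abs_mul]
        _ ≤ (4*m^2) * 1 := by
            apply mul_le_mul _ h1 (abs_nonneg _) (by positivity)
            rw [abs_of_nonneg (by positivity)]
        _ = 4*m^2 := by ring
    have h1 : s ^ 2 * (f₁ r) ^ 2 + (γ' t) ^ 2 / 4 ≤ (s * f₁ r + |γ' t|/2)^2 := by
      nlinarith [abs_nonneg (γ' t), mul_nonneg hs.le hfpos, sq_abs (γ' t)]
    calc Real.sqrt (s ^ 2 * (f₁ r) ^ 2 + (γ' t) ^ 2 / 4)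
        ≤ Real.sqrt ((s * f₁ r + |γ' t|/2)^2) := Real.sqrt_le_sqrt h1
      _ = s * f₁ r + |γ' t|/2 := Real.sqrt_sq (by positivity)
      _ ≤ s*(ℓ - ℓ₁*m*(t - t^2)) + 2*m^2 := by
          have h2 : s * f₁ r ≤ s * (ℓ - ℓ₁*m*(t - t^2)) :=
            mul_le_mul_of_nonneg_left hfr hs.le
          linarith
  -- energy estimate
  have hfcont : ContinuousOn (fun t => f₁ (Real.sqrt (γ t))) (Icc (0:ℝ) 1) :=
    hf.cont.comp ((Real.continuous_sqrt.comp hγcont).continuousOn) hsq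
  have hEcont : ContinuousOn
      (fun t => Real.sqrt (s ^ 2 * (f₁ (Real.sqrt (γ t))) ^ 2 + (γ' t) ^ 2 / 4))
      (Icc (0:ℝ) 1) := by
    apply Real.continuous_sqrt.comp_continuousOn
    exact (continuousOn_const.mul (hfcont.pow 2)).add
      ((hγ'cont.continuousOn.pow 2).div_const 4)
  have hEcont' : ContinuousOn
      (fun t => Real.sqrt (s ^ 2 * (f₁ (Real.sqrt (γ t))) ^ 2 + (γ' t) ^ 2 / 4))
      (uIcc (0:ℝ) 1) := by rwa [uIcc_of_le (by norm_num : (0:ℝ) ≤ 1)]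
  have hE1 : energy f₁ s γ γ' ≤ ∫ t in (0:ℝ)..1, (s*(ℓ - ℓ₁*m*(t - t^2)) + 2*m^2) := by
    apply intervalIntegral.integral_mono_on (by norm_num)
      hEcont'.intervalIntegrable
      (Continuous.intervalIntegrable (by fun_prop) 0 1)
    exact hpt
  have hval : (∫ t in (0:ℝ)..1, (s*(ℓ - ℓ₁*m*(t - t^2)) + 2*m^2))
      = s*ℓ - s*ℓ₁*m/6 + 2*m^2 := by
    have hF : ∀ t ∈ uIcc (0:ℝ) 1,
        HasDerivAt (fun t => s*ℓ*t - s*ℓ₁*m*(t^2/2 - t^3/3) + 2*m^2*t)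
          (s*(ℓ - ℓ₁*m*(t - t^2)) + 2*m^2) t := by
      intro t _
      have h1 : HasDerivAt (fun t : ℝ => s*ℓ*t - s*ℓ₁*m*(t^2/2 - t^3/3) + 2*m^2*t)
          (s*ℓ*1 - s*ℓ₁*m*((↑2*t^1)/2 - (↑3*t^2)/3) + 2*m^2*1) t :=
        (((hasDerivAt_id t).const_mul (s*ℓ)).sub
          ((((hasDerivAt_pow 2 t).div_const 2).sub
            ((hasDerivAt_pow 3 t).div_const 3)).const_mul (s*ℓ₁*m))).add
          ((hasDerivAt_id t).const_mul (2*m^2))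
      convert h1 using 1
      push_cast
      ring
    rw [intervalIntegral.integral_eq_sub_of_hasDerivAt hF
      (Continuous.intervalIntegrable (by fun_prop) 0 1)]
    ring
  have hfinal : s*ℓ - s*ℓ₁*m/6 + 2*m^2 < ℓ*s := by nlinarith
  have hmem : energy f₁ s γ γ' ∈
      {x | ∃ γ γ' : ℝ → ℝ, Admissible γ γ' ∧ x = energy f₁ s γ γ'} :=
    ⟨γ, γ', hadm, rfl⟩
  have hbdd : BddBelow {x | ∃ γ γ' : ℝ → ℝ, Admissible γ γ' ∧ x = energy f₁ s γ γ'} := by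
    refine ⟨0, ?_⟩
    rintro x ⟨a, b, _, rfl⟩
    exact intervalIntegral.integral_nonneg (by norm_num) (fun u _ => Real.sqrt_nonneg _)
  calc g0 f₁ s ≤ energy f₁ s γ γ' := csInf_le hbdd hmem
    _ ≤ ∫ t in (0:ℝ)..1, (s*(ℓ - ℓ₁*m*(t - t^2)) + 2*m^2) := hE1
    _ = s*ℓ - s*ℓ₁*m/6 + 2*m^2 := hval
    _ < ℓ*s := hfinal
end

section
/- g₀ is Lipschitz continuous on [0,∞) with Lipschitz constant ℓ: for all s, t ≥ 0, |g₀(s) − g₀(t)| ≤ ℓ·|s − t|. -/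
open MeasureTheory Set Filter

/-- Pointwise Lipschitz bound for the integrand. -/
lemma sqrt_key (s t F G : ℝ) (hF : 0 ≤ F) (hG : 0 ≤ G) (ht : 0 ≤ t) :
    Real.sqrt (s ^ 2 * F ^ 2 + G) ≤ Real.sqrt (t ^ 2 * F ^ 2 + G) + |s - t| * F := by
  set a := Real.sqrt (t ^ 2 * F ^ 2 + G) with ha_def
  have ha : 0 ≤ a := Real.sqrt_nonneg _
  have ha2 : a ^ 2 = t ^ 2 * F ^ 2 + G := Real.sq_sqrt (by positivity)
  have htF : t * F ≤ a := by
    rw [ha_def]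
    rw [Real.le_sqrt (by positivity) (by positivity)]
    nlinarith
  have hd : 0 ≤ |s - t| := abs_nonneg _
  have hd1 : s - t ≤ |s - t| := le_abs_self _
  have hd2 : |s - t| ^ 2 = (s - t) ^ 2 := sq_abs _
  calc Real.sqrt (s ^ 2 * F ^ 2 + G) ≤ Real.sqrt ((a + |s - t| * F) ^ 2) := by
        apply Real.sqrt_le_sqrt
        nlinarith [mul_nonneg (sub_nonneg.mpr htF) (mul_nonneg hd hF),
          mul_nonneg (sub_nonneg.mpr hd1) (mul_nonneg (mul_nonneg ht hF) hF)]
    _ = a + |s - t| * F := Real.sqrt_sq (by positivity)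

section aux

variable {ℓ ℓ₁ : ℝ} {f₁ : ℝ → ℝ}

lemma f1_mem {γ γ' : ℝ → ℝ} (hf : F1Hyp ℓ ℓ₁ f₁) (hγ : Admissible γ γ')
    {u : ℝ} (hu : u ∈ Icc (0:ℝ) 1) :
    0 ≤ f₁ (Real.sqrt (γ u)) ∧ f₁ (Real.sqrt (γ u)) ≤ ℓ := by
  obtain ⟨h0, h1⟩ := hγ.2.2.1 u hu
  have hmem : Real.sqrt (γ u) ∈ Icc (0:ℝ) 1 :=
    ⟨Real.sqrt_nonneg _, by rw [show (1:ℝ) = Real.sqrt 1 by simp]; exact Real.sqrt_le_sqrt h1⟩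
  constructor
  · exact hf.nonneg _ hmem
  · rcases eq_or_lt_of_le hmem.1 with h | h
    · rw [← h, hf.f10]
    · have := hf.anti (left_mem_Icc.mpr zero_le_one) hmem h
      rw [hf.f10] at this; exact this.le

lemma integrand_integrable (hf : F1Hyp ℓ ℓ₁ f₁) {γ γ' : ℝ → ℝ} (hγ : Admissible γ γ')
    (s : ℝ) :
    IntegrableOn (fun u => Real.sqrt (s ^ 2 * (f₁ (Real.sqrt (γ u))) ^ 2 + (γ' u) ^ 2 / 4))
      (Icc 0 1) := by
  have hγcont : ContinuousOn γ (Icc 0 1) := by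
    have hprim : ContinuousOn (fun x => ∫ u in (0:ℝ)..x, γ' u) (Icc 0 1) := by
      have := intervalIntegral.continuousOn_primitive_interval
        (a := (0:ℝ)) (b := 1) (f := γ') (μ := volume) (by simpa [uIcc_of_le zero_le_one] using hγ.1)
      simpa [uIcc_of_le zero_le_one] using this
    exact ContinuousOn.congr hprim hγ.2.1
  have hFcont : ContinuousOn (fun u => f₁ (Real.sqrt (γ u))) (Icc 0 1) := by
    apply hf.cont.comp (Real.continuous_sqrt.comp_continuousOn hγcont)
    intro u hu
    obtain ⟨h0, h1⟩ := hγ.2.2.1 u hu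
    exact ⟨Real.sqrt_nonneg _, by
      rw [show (1:ℝ) = Real.sqrt 1 by simp]; exact Real.sqrt_le_sqrt h1⟩
  have hFm : AEStronglyMeasurable (fun u => f₁ (Real.sqrt (γ u)))
      (volume.restrict (Icc (0:ℝ) 1)) :=
    hFcont.aestronglyMeasurable measurableSet_Icc
  have hγ'm : AEStronglyMeasurable γ' (volume.restrict (Icc (0:ℝ) 1)) :=
    hγ.1.aestronglyMeasurable
  have hm : AEStronglyMeasurable
      (fun u => Real.sqrt (s ^ 2 * (f₁ (Real.sqrt (γ u))) ^ 2 + (γ' u) ^ 2 / 4))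
      (volume.restrict (Icc (0:ℝ) 1)) := by
    have h1 : AEStronglyMeasurable
        (fun u => Real.sqrt (s ^ 2 * (f₁ (Real.sqrt (γ u)) * f₁ (Real.sqrt (γ u)))
          + (γ' u * γ' u) * (1 / 4))) (volume.restrict (Icc (0:ℝ) 1)) :=
      Real.continuous_sqrt.comp_aestronglyMeasurable
        ((aestronglyMeasurable_const.mul (hFm.mul hFm)).add
          ((hγ'm.mul hγ'm).mul aestronglyMeasurable_const))
    exact h1.congr (Filter.Eventually.of_forall
      (fun u => congrArg Real.sqrt (by ring)))
  have hbound : IntegrableOn (fun u => |s| * ℓ + |γ' u| / 2) (Icc (0:ℝ) 1) :=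
    (integrableOn_const (μ := volume) (s := Icc (0:ℝ) 1) (C := |s| * ℓ) measure_Icc_lt_top.ne enorm_ne_top).add (hγ.1.abs.div_const 2)
  apply hbound.mono' hm
  rw [ae_restrict_iff' measurableSet_Icc]
  refine Filter.Eventually.of_forall (fun u hu => ?_)
  obtain ⟨hF0, hFl⟩ := f1_mem hf hγ hu
  have h1 : Real.sqrt (s ^ 2 * (f₁ (Real.sqrt (γ u))) ^ 2 + (γ' u) ^ 2 / 4)
      ≤ |s| * ℓ + |γ' u| / 2 := by
    rw [Real.sqrt_le_iff]
    constructor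
    · have h0 : 0 ≤ |s| * ℓ := mul_nonneg (abs_nonneg s) hf.hl.le
      have h0' : 0 ≤ |γ' u| := abs_nonneg _
      linarith
    · have h2 : (f₁ (Real.sqrt (γ u))) ^ 2 ≤ ℓ ^ 2 := by nlinarith
      have h3 : s ^ 2 = |s| ^ 2 := (sq_abs s).symm
      have h4 : (γ' u) ^ 2 = |γ' u| ^ 2 := (sq_abs _).symm
      nlinarith [abs_nonneg s, abs_nonneg (γ' u), hf.hl.le,
        mul_nonneg (mul_nonneg (abs_nonneg s) hf.hl.le) (abs_nonneg (γ' u)),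
        sq_nonneg s, mul_le_mul_of_nonneg_left h2 (sq_nonneg s)]
  rwa [Real.norm_eq_abs, abs_of_nonneg (Real.sqrt_nonneg _)]

lemma energy_lipschitz (hf : F1Hyp ℓ ℓ₁ f₁) {γ γ' : ℝ → ℝ} (hγ : Admissible γ γ')
    (s t : ℝ) (ht : 0 ≤ t) :
    energy f₁ s γ γ' ≤ energy f₁ t γ γ' + ℓ * |s - t| := by
  have hIs := integrand_integrable hf hγ s
  have hIt := integrand_integrable hf hγ t
  have hint_s : IntervalIntegrable
      (fun u => Real.sqrt (s ^ 2 * (f₁ (Real.sqrt (γ u))) ^ 2 + (γ' u) ^ 2 / 4))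
      volume 0 1 := by
    rw [intervalIntegrable_iff_integrableOn_Icc_of_le zero_le_one]; exact hIs
  have hint_t : IntervalIntegrable
      (fun u => Real.sqrt (t ^ 2 * (f₁ (Real.sqrt (γ u))) ^ 2 + (γ' u) ^ 2 / 4) + ℓ * |s - t|)
      volume 0 1 := by
    apply IntervalIntegrable.add _ intervalIntegrable_const
    rw [intervalIntegrable_iff_integrableOn_Icc_of_le zero_le_one]; exact hIt
  have hmono := intervalIntegral.integral_mono_on zero_le_one hint_s hint_t
    (fun u hu => by
      obtain ⟨hF0, hFl⟩ := f1_mem hf hγ hu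
      calc Real.sqrt (s ^ 2 * (f₁ (Real.sqrt (γ u))) ^ 2 + (γ' u) ^ 2 / 4)
          ≤ Real.sqrt (t ^ 2 * (f₁ (Real.sqrt (γ u))) ^ 2 + (γ' u) ^ 2 / 4)
            + |s - t| * f₁ (Real.sqrt (γ u)) :=
            sqrt_key s t _ _ hF0 (by positivity) ht
        _ ≤ _ := by
            have : |s - t| * f₁ (Real.sqrt (γ u)) ≤ ℓ * |s - t| := by
              rw [mul_comm ℓ]
              exact mul_le_mul_of_nonneg_left hFl (abs_nonneg _)
            linarith)
  rw [intervalIntegral.integral_add _ intervalIntegrable_const] at hmono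
  · simpa [energy] using hmono
  · rw [intervalIntegrable_iff_integrableOn_Icc_of_le zero_le_one]; exact hIt

lemma energy_set_nonempty (f₁ : ℝ → ℝ) (s : ℝ) :
    {x | ∃ γ γ' : ℝ → ℝ, Admissible γ γ' ∧ x = energy f₁ s γ γ'}.Nonempty := by
  refine ⟨energy f₁ s (fun _ => 0) (fun _ => 0), (fun _ => 0), (fun _ => 0), ?_, rfl⟩
  refine ⟨integrableOn_const (μ := volume) (s := Icc (0:ℝ) 1) (C := (0:ℝ)) measure_Icc_lt_top.ne enorm_ne_top, ?_, ?_, rfl, rfl⟩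
  · intro t _; simp
  · intro t _; norm_num

lemma energy_set_bddBelow (f₁ : ℝ → ℝ) (s : ℝ) :
    BddBelow {x | ∃ γ γ' : ℝ → ℝ, Admissible γ γ' ∧ x = energy f₁ s γ γ'} := by
  refine ⟨0, fun x hx => ?_⟩
  obtain ⟨γ, γ', _, rfl⟩ := hx
  exact intervalIntegral.integral_nonneg zero_le_one (fun u _ => Real.sqrt_nonneg _)

lemma g0_half (hf : F1Hyp ℓ ℓ₁ f₁) (s t : ℝ) (ht : 0 ≤ t) :
    g0 f₁ s ≤ g0 f₁ t + ℓ * |s - t| := by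
  unfold g0
  rw [← sub_le_iff_le_add]
  apply le_csInf (energy_set_nonempty f₁ t)
  rintro x ⟨γ, γ', hγ, rfl⟩
  rw [sub_le_iff_le_add]
  calc sInf {x | ∃ γ γ' : ℝ → ℝ, Admissible γ γ' ∧ x = energy f₁ s γ γ'}
      ≤ energy f₁ s γ γ' := csInf_le (energy_set_bddBelow f₁ s) ⟨γ, γ', hγ, rfl⟩
    _ ≤ energy f₁ t γ γ' + ℓ * |s - t| := energy_lipschitz hf hγ s t ht

end aux

/-- `g₀` is Lipschitz on `[0,∞)` with constant `ℓ`. -/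
theorem stmt_5 (ℓ ℓ₁ : ℝ) (f₁ : ℝ → ℝ) (hf : F1Hyp ℓ ℓ₁ f₁) :
    ∀ s t : ℝ, 0 ≤ s → 0 ≤ t → |g0 f₁ s - g0 f₁ t| ≤ ℓ * |s - t| := by
  intro s t hs ht
  rw [abs_sub_le_iff]
  constructor
  · have := g0_half hf s t ht
    linarith
  · have := g0_half hf t s hs
    rw [abs_sub_comm] at this
    linarith
end

section
/- If η_f = 0, then g₀(s) < 1 for every s ≥ 0. -/
open MeasureTheory Set Filter

/-- `η_f := liminf_{t→1⁻} f₁(t)/(1−t²)`, as an element of `[0,∞]`. -/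
noncomputable def etaF (f₁ : ℝ → ℝ) : ENNReal :=
  Filter.liminf (fun t => ENNReal.ofReal (f₁ t / (1 - t ^ 2))) (nhdsWithin 1 (Iio 1))

set_option maxHeartbeats 1000000

private lemma sqrt_quad_le (A B : ℝ) (hA : 0 ≤ A) :
    Real.sqrt (A ^ 2 + B ^ 2 / 4) ≤ A + |B| / 2 := by
  have h1 : A ^ 2 + B ^ 2 / 4 ≤ (A + |B| / 2) ^ 2 := by
    nlinarith [abs_nonneg B, sq_abs B, mul_nonneg hA (abs_nonneg B)]
  calc Real.sqrt (A ^ 2 + B ^ 2 / 4) ≤ Real.sqrt ((A + |B| / 2) ^ 2) := Real.sqrt_le_sqrt h1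
  _ = A + |B| / 2 := Real.sqrt_sq (by positivity)

theorem stmt_6' (ℓ ℓ₁ : ℝ) (f₁ : ℝ → ℝ)
    (hl : 0 < ℓ)
    (cont : ContinuousOn f₁ (Icc 0 1))
    (anti : StrictAntiOn f₁ (Icc 0 1))
    (nonneg : ∀ t ∈ Icc (0:ℝ) 1, 0 ≤ f₁ t)
    (f10 : f₁ 0 = ℓ)
    (heta : Filter.liminf (fun t => ENNReal.ofReal (f₁ t / (1 - t ^ 2)))
      (nhdsWithin 1 (Iio 1)) = 0) :
    ∀ s : ℝ, 0 ≤ s →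
      sInf {x | ∃ γ γ' : ℝ → ℝ,
        (IntegrableOn γ' (Icc 0 1) ∧
          (∀ t ∈ Icc (0:ℝ) 1, γ t = ∫ u in (0:ℝ)..t, γ' u) ∧
          (∀ t ∈ Icc (0:ℝ) 1, 0 ≤ γ t ∧ γ t ≤ 1) ∧ γ 0 = 0 ∧ γ 1 = 0) ∧
        x = ∫ t in (0:ℝ)..1,
          Real.sqrt (s ^ 2 * (f₁ (Real.sqrt (γ t))) ^ 2 + (γ' t) ^ 2 / 4)} < 1 := by
  intro s hs
  set δ : ℝ := 1 / (4 * (s + 1)) with hδdef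
  have hδpos : 0 < δ := by positivity
  -- find t₀ close to 1 with f₁ t₀ small
  have hfreq : ∃ᶠ t in nhdsWithin (1:ℝ) (Iio 1),
      ENNReal.ofReal (f₁ t / (1 - t ^ 2)) < ENNReal.ofReal δ := by
    apply Filter.frequently_lt_of_liminf_lt
      (isCoboundedUnder_ge_of_le _ (fun x => le_top))
    rw [heta]
    exact ENNReal.ofReal_pos.mpr hδpos
  have hEv : ∀ᶠ t in nhdsWithin (1:ℝ) (Iio 1), t ∈ Ioo (1/2:ℝ) 1 :=
    Ioo_mem_nhdsLT_of_mem (by norm_num)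
  obtain ⟨t₀, hlt, ht₀⟩ := (hfreq.and_eventually hEv).exists
  have ht₀0 : (0:ℝ) < t₀ := lt_trans (by norm_num) ht₀.1
  have ht₀1 : t₀ < 1 := ht₀.2
  set a : ℝ := t₀ ^ 2 with hadef
  have ha0 : 0 < a := by positivity
  have ha1 : a < 1 := by nlinarith
  have hfpos : 0 < 1 - a := by linarith
  have hδ1 : f₁ t₀ / (1 - a) < δ := by
    have := (ENNReal.ofReal_lt_ofReal_iff hδpos).mp hlt
    rwa [hadef]
  have hf₀nn : 0 ≤ f₁ t₀ := nonneg t₀ ⟨ht₀0.le, ht₀1.le⟩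
  have hδ2 : f₁ t₀ < δ * (1 - a) := by
    have := (div_lt_iff₀ hfpos).mp hδ1
    linarith
  set τ : ℝ := (1 - a) / (8 * (s * ℓ + 1)) with hτdef
  have hsl : 0 ≤ s * ℓ := mul_nonneg hs hl.le
  have hτ0 : 0 < τ := by positivity
  have hτ8 : τ ≤ 1 / 8 := by
    rw [hτdef, div_le_div_iff₀ (by positivity) (by norm_num)]
    nlinarith
  have hττ : τ ≤ 1 - τ := by linarith
  set r : ℝ := a / τ with hrdef
  have hr0 : 0 < r := by positivity
  have har : r * τ = a := div_mul_cancel₀ a hτ0.ne'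
  -- the competitor
  set γ' : ℝ → ℝ := fun u => if u ≤ τ then r else if u ≤ 1 - τ then 0 else -r with hγ'def
  set γ : ℝ → ℝ := fun t => if t ≤ τ then r * max t 0 else if t ≤ 1 - τ then a
      else r * max (1 - t) 0 with hγdef
  have hmγ' : Measurable γ' :=
    Measurable.ite measurableSet_Iic measurable_const
      (Measurable.ite measurableSet_Iic measurable_const measurable_const)
  have hmγ : Measurable γ :=
    Measurable.ite measurableSet_Iic (measurable_const.mul (measurable_id.max measurable_const))
      (Measurable.ite measurableSet_Iic measurable_const
        (measurable_const.mul ((measurable_const.sub measurable_id).max measurable_const)))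
  have hγ'bd : ∀ u, |γ' u| ≤ r := by
    intro u
    simp only [hγ'def]
    split_ifs <;> simp [abs_of_nonneg hr0.le, hr0.le]
  -- integrability of γ'
  have hIccfin : volume (Icc (0:ℝ) 1) < ⊤ := by
    rw [Real.volume_Icc]; exact ENNReal.ofReal_lt_top
  have hintγ' : IntegrableOn γ' (Icc 0 1) := by
    apply Integrable.mono' (g := fun _ => r)
      (integrableOn_const hIccfin.ne) hmγ'.aestronglyMeasurable
    exact Filter.Eventually.of_forall fun u => hγ'bd u
  have hii : ∀ c d : ℝ, c ∈ Icc (0:ℝ) 1 → d ∈ Icc (0:ℝ) 1 →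
      IntervalIntegrable γ' volume c d := by
    intro c d hc hd
    apply IntegrableOn.intervalIntegrable
    apply hintγ'.mono_set
    rw [← uIcc_of_le (zero_le_one : (0:ℝ) ≤ 1)] at hc hd ⊢
    exact uIcc_subset_uIcc hc hd
  -- integral computations for γ'
  have J1 : ∀ t : ℝ, 0 ≤ t → t ≤ τ → ∫ u in (0:ℝ)..t, γ' u = r * t := by
    intro t h0 h1
    rw [intervalIntegral.integral_congr_ae (g := fun _ => r)]
    · rw [intervalIntegral.integral_const, smul_eq_mul]; ring
    · apply Filter.Eventually.of_forall
      intro x hx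
      rw [uIoc_of_le h0] at hx
      simp only [hγ'def]
      rw [if_pos (hx.2.trans h1)]
  have Jmid : ∀ c d : ℝ, τ ≤ c → c ≤ d → d ≤ 1 - τ → ∫ u in c..d, γ' u = 0 := by
    intro c d h0 h1 h2
    rw [intervalIntegral.integral_congr_ae (g := fun _ => (0:ℝ))]
    · simp
    · apply Filter.Eventually.of_forall
      intro x hx
      rw [uIoc_of_le h1] at hx
      simp only [hγ'def]
      rw [if_neg (by linarith [hx.1, h0] : ¬ x ≤ τ), if_pos (hx.2.trans h2)]
  have J3 : ∀ t : ℝ, 1 - τ ≤ t → ∫ u in (1-τ)..t, γ' u = -r * (t - (1 - τ)) := by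
    intro t h1
    rw [intervalIntegral.integral_congr_ae (g := fun _ => -r)]
    · rw [intervalIntegral.integral_const, smul_eq_mul]; ring
    · apply Filter.Eventually.of_forall
      intro x hx
      rw [uIoc_of_le h1] at hx
      simp only [hγ'def]
      rw [if_neg (by linarith [hx.1] : ¬ x ≤ τ), if_neg (by linarith [hx.1] : ¬ x ≤ 1 - τ)]
  have Jτ : ∫ u in (0:ℝ)..τ, γ' u = a := by rw [J1 τ hτ0.le le_rfl]; linarith [har]
  have hτmem : τ ∈ Icc (0:ℝ) 1 := ⟨hτ0.le, by linarith⟩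
  have h1τmem : (1 - τ) ∈ Icc (0:ℝ) 1 := ⟨by linarith, by linarith⟩
  -- FTC for γ
  have hFTC : ∀ t ∈ Icc (0:ℝ) 1, γ t = ∫ u in (0:ℝ)..t, γ' u := by
    intro t ht
    by_cases h1 : t ≤ τ
    · rw [J1 t ht.1 h1]
      simp only [hγdef]
      rw [if_pos h1, max_eq_left ht.1]
    · by_cases h2 : t ≤ 1 - τ
      · have hsplit := intervalIntegral.integral_add_adjacent_intervals
          (hii 0 τ (by constructor <;> norm_num) hτmem)
          (hii τ t hτmem ht)
        rw [← hsplit, Jτ, Jmid τ t le_rfl (by linarith) h2]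
        simp only [hγdef]
        rw [if_neg h1, if_pos h2]; ring
      · have hs1 := intervalIntegral.integral_add_adjacent_intervals
          (hii 0 τ (by constructor <;> norm_num) hτmem)
          (hii τ (1-τ) hτmem h1τmem)
        have hs2 := intervalIntegral.integral_add_adjacent_intervals
          (hii 0 (1-τ) (by constructor <;> norm_num) h1τmem)
          (hii (1-τ) t h1τmem ht)
        rw [← hs2, ← hs1, Jτ, Jmid τ (1-τ) le_rfl hττ le_rfl,
          J3 t (by linarith)]
        simp only [hγdef]
        rw [if_neg h1, if_neg h2, max_eq_left (by linarith [ht.2])]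
        nlinarith [har]
  -- bounds on γ
  have hγbd : ∀ t : ℝ, 0 ≤ γ t ∧ γ t ≤ a := by
    intro t
    simp only [hγdef]
    split_ifs with h1 h2
    · constructor
      · exact mul_nonneg hr0.le (le_max_right _ _)
      · calc r * max t 0 ≤ r * τ := by
              apply mul_le_mul_of_nonneg_left (max_le h1 hτ0.le) hr0.le
        _ = a := by linarith [har]
    · exact ⟨ha0.le, le_rfl⟩
    · constructor
      · exact mul_nonneg hr0.le (le_max_right _ _)
      · calc r * max (1-t) 0 ≤ r * τ := by
              apply mul_le_mul_of_nonneg_left (max_le (by linarith) hτ0.le) hr0.le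
        _ = a := by linarith [har]
  have hsγ : ∀ t : ℝ, Real.sqrt (γ t) ∈ Icc (0:ℝ) 1 := by
    intro t
    refine ⟨Real.sqrt_nonneg _, ?_⟩
    rw [show (1:ℝ) = Real.sqrt 1 by simp]
    exact Real.sqrt_le_sqrt (le_trans (hγbd t).2 ha1.le)
  -- f₁ composed values
  have hf1le : ∀ x ∈ Icc (0:ℝ) 1, f₁ x ≤ ℓ := by
    intro x hx
    have := anti.antitoneOn (left_mem_Icc.mpr zero_le_one) hx hx.1
    rwa [f10] at this
  have hGnn : ∀ t : ℝ, 0 ≤ f₁ (Real.sqrt (γ t)) := fun t => nonneg _ (hsγ t)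
  have hGle : ∀ t : ℝ, f₁ (Real.sqrt (γ t)) ≤ ℓ := fun t => hf1le _ (hsγ t)
  -- the energy integrand
  set F : ℝ → ℝ := fun t =>
    Real.sqrt (s ^ 2 * (f₁ (Real.sqrt (γ t))) ^ 2 + (γ' t) ^ 2 / 4) with hFdef
  set C : ℝ := s * ℓ + r / 2 with hCdef
  have hCnn : 0 ≤ C := by positivity
  have hFle : ∀ t : ℝ, F t ≤ s * f₁ (Real.sqrt (γ t)) + |γ' t| / 2 := by
    intro t
    have h := sqrt_quad_le (s * f₁ (Real.sqrt (γ t))) (γ' t)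
      (mul_nonneg hs (hGnn t))
    have : s ^ 2 * (f₁ (Real.sqrt (γ t))) ^ 2 = (s * f₁ (Real.sqrt (γ t))) ^ 2 := by ring
    simp only [hFdef]
    rw [this]; exact h
  -- measurability of F
  have hmG : Measurable (fun t => f₁ (Real.sqrt (γ t))) := by
    have hfc : Continuous ((Icc (0:ℝ) 1).restrict f₁) := cont.restrict
    have heq : (fun t => f₁ (Real.sqrt (γ t))) =
        ((Icc (0:ℝ) 1).restrict f₁) ∘ (fun t => (⟨Real.sqrt (γ t), hsγ t⟩ : Icc (0:ℝ) 1)) := rfl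
    rw [heq]
    exact hfc.measurable.comp (Measurable.subtype_mk (Real.continuous_sqrt.measurable.comp hmγ))
  have hmF : Measurable F := by
    apply Measurable.sqrt
    exact ((measurable_const.mul (hmG.pow measurable_const)).add
      ((hmγ'.pow measurable_const).div measurable_const))
  have hFnn : ∀ t, 0 ≤ F t := fun t => Real.sqrt_nonneg _
  have hFbd : ∀ t, |F t| ≤ C := by
    intro t
    rw [abs_of_nonneg (hFnn t)]
    calc F t ≤ s * f₁ (Real.sqrt (γ t)) + |γ' t| / 2 := hFle t
    _ ≤ s * ℓ + r / 2 := by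
        have := hγ'bd t
        have := mul_le_mul_of_nonneg_left (hGle t) hs
        rw [hCdef] at *
        linarith
    _ = C := rfl
  have hFint : IntervalIntegrable F volume 0 1 := by
    apply IntegrableOn.intervalIntegrable
    rw [uIcc_of_le zero_le_one]
    apply Integrable.mono' (g := fun _ => C)
      (integrableOn_const hIccfin.ne) hmF.aestronglyMeasurable
    exact Filter.Eventually.of_forall fun u => hFbd u
  -- the majorant
  set h : ℝ → ℝ := fun t => if t ≤ τ then C else if t ≤ 1 - τ then s * f₁ t₀ else C with hhdef
  have hmh : Measurable h :=
    Measurable.ite measurableSet_Iic measurable_const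
      (Measurable.ite measurableSet_Iic measurable_const measurable_const)
  have hhbd : ∀ t, |h t| ≤ C + s * f₁ t₀ := by
    intro t
    have h1 : 0 ≤ s * f₁ t₀ := mul_nonneg hs hf₀nn
    simp only [hhdef]
    split_ifs
    · rw [abs_of_nonneg hCnn]; linarith
    · rw [abs_of_nonneg h1]; linarith
    · rw [abs_of_nonneg hCnn]; linarith
  have hhint : IntervalIntegrable h volume 0 1 := by
    apply IntegrableOn.intervalIntegrable
    rw [uIcc_of_le zero_le_one]
    apply Integrable.mono' (g := fun _ => C + s * f₁ t₀)
      (integrableOn_const hIccfin.ne) hmh.aestronglyMeasurable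
    exact Filter.Eventually.of_forall fun u => hhbd u
  have hhii : ∀ c d : ℝ, c ∈ Icc (0:ℝ) 1 → d ∈ Icc (0:ℝ) 1 →
      IntervalIntegrable h volume c d := by
    intro c d hc hd
    apply hhint.mono_set
    rw [← uIcc_of_le (zero_le_one : (0:ℝ) ≤ 1)] at hc hd
    exact uIcc_subset_uIcc hc hd
  -- pointwise bound F ≤ h
  have hFh : ∀ t ∈ Icc (0:ℝ) 1, F t ≤ h t := by
    intro t _
    have hb := hFle t
    have hG := mul_le_mul_of_nonneg_left (hGle t) hs
    simp only [hhdef]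
    split_ifs with h1 h2
    · have : |γ' t| ≤ r := hγ'bd t
      rw [hCdef]; linarith
    · have hγt : γ t = a := by simp only [hγdef]; rw [if_neg h1, if_pos h2]
      have hγ't : γ' t = 0 := by simp only [hγ'def]; rw [if_neg h1, if_pos h2]
      have hsq : Real.sqrt (γ t) = t₀ := by rw [hγt, hadef, Real.sqrt_sq ht₀0.le]
      rw [hsq] at hb
      rw [hγ't] at hb
      simpa using hb
    · have : |γ' t| ≤ r := hγ'bd t
      rw [hCdef]; linarith
  -- value of ∫ h
  have hhval : ∫ t in (0:ℝ)..1, h t = 2 * τ * C + (1 - 2*τ) * (s * f₁ t₀) := by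
    have e1 : ∫ t in (0:ℝ)..τ, h t = τ * C := by
      rw [intervalIntegral.integral_congr_ae (g := fun _ => C)]
      · rw [intervalIntegral.integral_const, smul_eq_mul]; ring
      · apply Filter.Eventually.of_forall
        intro x hx
        rw [uIoc_of_le hτ0.le] at hx
        simp only [hhdef]
        rw [if_pos hx.2]
    have e2 : ∫ t in τ..(1-τ), h t = (1 - 2*τ) * (s * f₁ t₀) := by
      rw [intervalIntegral.integral_congr_ae (g := fun _ => s * f₁ t₀)]
      · rw [intervalIntegral.integral_const, smul_eq_mul]; ring
      · apply Filter.Eventually.of_forall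
        intro x hx
        rw [uIoc_of_le hττ] at hx
        simp only [hhdef]
        rw [if_neg (by linarith [hx.1] : ¬ x ≤ τ), if_pos hx.2]
    have e3 : ∫ t in (1-τ)..1, h t = τ * C := by
      rw [intervalIntegral.integral_congr_ae (g := fun _ => C)]
      · rw [intervalIntegral.integral_const, smul_eq_mul]; ring
      · apply Filter.Eventually.of_forall
        intro x hx
        rw [uIoc_of_le (by linarith : 1 - τ ≤ 1)] at hx
        simp only [hhdef]
        rw [if_neg (by linarith [hx.1] : ¬ x ≤ τ), if_neg (by linarith [hx.1] : ¬ x ≤ 1 - τ)]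
    have hs1 := intervalIntegral.integral_add_adjacent_intervals
      (hhii 0 τ (by constructor <;> norm_num) hτmem)
      (hhii τ (1-τ) hτmem h1τmem)
    have hs2 := intervalIntegral.integral_add_adjacent_intervals
      (hhii 0 (1-τ) (by constructor <;> norm_num) h1τmem)
      (hhii (1-τ) 1 h1τmem (by constructor <;> norm_num))
    rw [← hs2, ← hs1, e1, e2, e3]; ring
  -- the energy is < 1
  have hElt : ∫ t in (0:ℝ)..1, F t < 1 := by
    have hmono := intervalIntegral.integral_mono_on zero_le_one hFint hhint hFh
    have key : 2 * τ * C + (1 - 2*τ) * (s * f₁ t₀) < 1 := by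
      have h1 : 2 * τ * C = 2 * τ * (s * ℓ) + a := by
        rw [hCdef]; linear_combination har
      have h2 : 2 * τ * (s * ℓ) ≤ (1 - a) / 4 := by
        have : τ * (8 * (s * ℓ + 1)) = 1 - a := by
          rw [hτdef]; field_simp
        nlinarith
      have h3 : (1 - 2*τ) * (s * f₁ t₀) ≤ s * f₁ t₀ := by
        nlinarith [mul_nonneg hs hf₀nn]
      have h4 : s * f₁ t₀ ≤ (1 - a) / 4 := by
        have hδ4 : δ * (4 * (s + 1)) = 1 := by rw [hδdef]; field_simp
        have hsδ : s * δ ≤ 1 / 4 := by nlinarith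
        have hsd : s * δ * (1 - a) ≤ (1 - a) / 4 := by
          nlinarith [mul_nonneg (by linarith : (0:ℝ) ≤ 1 / 4 - s * δ) hfpos.le]
        calc s * f₁ t₀ ≤ s * (δ * (1 - a)) := mul_le_mul_of_nonneg_left hδ2.le hs
        _ = s * δ * (1 - a) := by ring
        _ ≤ (1 - a) / 4 := hsd
      linarith
    calc ∫ t in (0:ℝ)..1, F t ≤ ∫ t in (0:ℝ)..1, h t := hmono
    _ = 2 * τ * C + (1 - 2*τ) * (s * f₁ t₀) := hhval
    _ < 1 := key
  -- conclude
  set S : Set ℝ := {x | ∃ γ γ' : ℝ → ℝ,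
      (IntegrableOn γ' (Icc 0 1) ∧
        (∀ t ∈ Icc (0:ℝ) 1, γ t = ∫ u in (0:ℝ)..t, γ' u) ∧
        (∀ t ∈ Icc (0:ℝ) 1, 0 ≤ γ t ∧ γ t ≤ 1) ∧ γ 0 = 0 ∧ γ 1 = 0) ∧
      x = ∫ t in (0:ℝ)..1,
        Real.sqrt (s ^ 2 * (f₁ (Real.sqrt (γ t))) ^ 2 + (γ' t) ^ 2 / 4)} with hSdef
  have hγ0 : γ 0 = 0 := by
    simp only [hγdef]
    rw [if_pos hτ0.le]; simp
  have hγ1 : γ 1 = 0 := by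
    simp only [hγdef]
    rw [if_neg (by linarith : ¬ (1:ℝ) ≤ τ), if_neg (by linarith : ¬ (1:ℝ) ≤ 1 - τ)]
    simp
  have hmem : (∫ t in (0:ℝ)..1, F t) ∈ S := by
    refine ⟨γ, γ', ⟨hintγ', hFTC, ?_, hγ0, hγ1⟩, rfl⟩
    intro t _
    exact ⟨(hγbd t).1, le_trans (hγbd t).2 ha1.le⟩
  have hbdd : BddBelow S := by
    refine ⟨0, ?_⟩
    rintro x ⟨g, g', _, rfl⟩
    exact intervalIntegral.integral_nonneg zero_le_one (fun u _ => Real.sqrt_nonneg _)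
  exact lt_of_le_of_lt (csInf_le hbdd hmem) hElt


/-- if `η_f = 0`, then `g₀(s) < 1` for every `s ≥ 0`. -/
theorem stmt_6 (ℓ ℓ₁ : ℝ) (f₁ : ℝ → ℝ) (hf : F1Hyp ℓ ℓ₁ f₁)
    (heta : etaF f₁ = 0) :
    ∀ s : ℝ, 0 ≤ s → g0 f₁ s < 1 := by
  intro s hs
  exact stmt_6' ℓ ℓ₁ f₁ hf.hl hf.cont hf.anti hf.nonneg hf.f10 heta s hs
end

section
/- There exist constants C > 0 and s₀ > 0 such that for every s ∈ (0, s₀) and every admissible γ attaining the infimum defining g₀(s), one has max_{t ∈ [0,1]} γ(t) ≤ C·s^{4/3}. -/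
open MeasureTheory Set Filter

lemma sqrt_add_le' {A B : ℝ} (hA : 0 ≤ A) (hB : 0 ≤ B) :
    Real.sqrt (A + B) ≤ Real.sqrt A + Real.sqrt B := by
  rw [← Real.sqrt_sq (add_nonneg (Real.sqrt_nonneg A) (Real.sqrt_nonneg B))]
  apply Real.sqrt_le_sqrt
  nlinarith [Real.sq_sqrt hA, Real.sq_sqrt hB, Real.sqrt_nonneg A, Real.sqrt_nonneg B,
    mul_nonneg (Real.sqrt_nonneg A) (Real.sqrt_nonneg B)]

lemma lemA {a b L : ℝ} (ha : 0 ≤ a) (haL : a ≤ L) (hb : 0 ≤ b) (hL : 0 < L) :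
    a + (1/3) * min (b^2 / L) b ≤ Real.sqrt (a^2 + b^2) := by
  have hr0 : (0:ℝ) ≤ Real.sqrt (a^2 + b^2) := Real.sqrt_nonneg _
  have hr2 : (Real.sqrt (a^2 + b^2))^2 = a^2 + b^2 := Real.sq_sqrt (by positivity)
  set r := Real.sqrt (a^2 + b^2) with hr
  have hra : a ≤ r := by nlinarith [sq_nonneg b]
  rcases le_total b a with h | h
  · have hrle : r ≤ (3/2) * L := by nlinarith
    have h1 : b^2 / L ≤ 3 * (r - a) := by
      rw [div_le_iff₀ hL]; nlinarith
    have h2 : min (b^2/L) b ≤ b^2 / L := min_le_left _ _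
    linarith
  · have h2 : min (b^2/L) b ≤ b := min_le_right _ _
    have : a + (1/3) * b ≤ r := by nlinarith
    linarith

lemma lemB {x τ L : ℝ} (hx : 0 ≤ x) (hτ : 0 ≤ τ) (hL : 0 < L) :
    min (τ/(4*L)) (1/2) * (x - τ) ≤ min (x^2/(4*L)) (x/2) := by
  have hm0 : (0:ℝ) ≤ min (τ/(4*L)) (1/2) := le_min (by positivity) (by norm_num)
  rcases le_total x τ with h | h
  · exact (mul_nonpos_of_nonneg_of_nonpos hm0 (by linarith)).trans
      (le_min (by positivity) (by positivity))
  · refine le_min ?_ ?_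
    · calc min (τ/(4*L)) (1/2) * (x - τ) ≤ (τ/(4*L)) * (x - τ) :=
            mul_le_mul_of_nonneg_right (min_le_left _ _) (by linarith)
        _ ≤ x^2/(4*L) := by
            rw [div_mul_eq_mul_div, div_le_div_iff₀ (by positivity) (by positivity)]
            have h' : τ * (x - τ) ≤ x^2 := by nlinarith [sq_nonneg (x - τ)]
            exact mul_le_mul_of_nonneg_right h' (by positivity)
    · calc min (τ/(4*L)) (1/2) * (x - τ) ≤ (1/2) * (x - τ) :=
            mul_le_mul_of_nonneg_right (min_le_right _ _) (by linarith)
        _ ≤ x/2 := by linarith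

set_option maxHeartbeats 1000000 in
/-- there are `C > 0` and `s₀ > 0` such that every minimizer `γ` for `g₀(s)` with
`s ∈ (0, s₀)` satisfies `max_{[0,1]} γ ≤ C s^{4/3}`. -/
theorem stmt_10 (ℓ ℓ₁ : ℝ) (f₁ : ℝ → ℝ) (hf : F1Hyp ℓ ℓ₁ f₁) :
    ∃ C : ℝ, 0 < C ∧ ∃ s₀ : ℝ, 0 < s₀ ∧ ∀ s : ℝ, 0 < s → s < s₀ →
      ∀ γ γ' : ℝ → ℝ, Admissible γ γ' → energy f₁ s γ γ' = g0 f₁ s →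
        ∀ t ∈ Icc (0:ℝ) 1, γ t ≤ C * s ^ ((4:ℝ)/3) := by
  classical
  obtain ⟨δ, hδ0, hδ⟩ := Metric.tendsto_nhdsWithin_nhds.mp hf.lim0 ℓ₁ hf.hl1
  set δ₀ : ℝ := min (δ/2) 1 with hδ₀def
  have hδ₀0 : 0 < δ₀ := lt_min (by linarith) one_pos
  have hδ₀δ : δ₀ < δ := lt_of_le_of_lt (min_le_left _ _) (by linarith)
  set K : ℝ := max (2*ℓ₁) (ℓ/δ₀) with hKdef
  have hK0 : 0 < K := lt_max_of_lt_left (by linarith [hf.hl1])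
  have hlow : ∀ x ∈ Icc (0:ℝ) 1, ℓ - K * x ≤ f₁ x := by
    rintro x ⟨hx0, hx1⟩
    rcases eq_or_lt_of_le hx0 with rfl | hx0'
    · simp [← hf.f10]
    · rcases le_or_gt x δ₀ with hxδ | hxδ
      · have hd := hδ (mem_Ioi.mpr hx0')
          (by rw [Real.dist_eq, sub_zero, abs_of_pos hx0']; linarith)
        rw [Real.dist_eq, sub_zero, abs_lt] at hd
        have h2 : -ℓ₁ * x < f₁ x - ℓ + ℓ₁ * x := by
          have h := hd.1
          rw [lt_div_iff₀ hx0'] at h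
          linarith
        have hK2 : 2*ℓ₁ ≤ K := le_max_left _ _
        nlinarith
      · have h1 : ℓ/δ₀ ≤ K := le_max_right _ _
        have h2 : ℓ < (ℓ/δ₀) * x := by
          rw [div_mul_eq_mul_div, lt_div_iff₀ hδ₀0]
          nlinarith [hf.hl]
        have h3 : 0 ≤ f₁ x := hf.nonneg x ⟨hx0, hx1⟩
        nlinarith
  set C : ℝ := (12*ℓ*K) ^ ((2:ℝ)/3) + 36*K^2 + 1 with hCdef
  have hbase : (0:ℝ) ≤ 12*ℓ*K := by nlinarith [hf.hl, hK0]
  have hC0 : 0 < C := by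
    rw [hCdef]
    nlinarith [Real.rpow_nonneg hbase ((2:ℝ)/3), sq_nonneg K]
  refine ⟨C, hC0, 1, one_pos, ?_⟩
  intro s hs0 hs1 γ γ' hadm hmin t ht
  obtain ⟨hint, hftc, hbnd, hg0, hg1⟩ := hadm
  have hsl : 0 < s * ℓ := mul_pos hs0 hf.hl
  have hconst : ∀ c : ℝ, IntegrableOn (fun _ : ℝ => c) (Icc (0:ℝ) 1) volume :=
    fun c => integrableOn_const measure_Icc_lt_top.ne
  -- g0 ≤ s ℓ
  have hzero_mem : s * ℓ ∈ {x | ∃ γ γ' : ℝ → ℝ, Admissible γ γ' ∧ x = energy f₁ s γ γ'} := by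
    refine ⟨fun _ => 0, fun _ => 0,
      ⟨hconst 0, fun u hu => by simp, fun u hu => by norm_num, rfl, rfl⟩, ?_⟩
    have h1 : (fun u : ℝ => Real.sqrt (s ^ 2 * (f₁ (Real.sqrt ((0:ℝ)))) ^ 2 + (0:ℝ) ^ 2 / 4))
        = fun _ : ℝ => s * ℓ := by
      funext u
      rw [Real.sqrt_zero, hf.f10,
        show s ^ 2 * ℓ ^ 2 + (0:ℝ) ^ 2 / 4 = (s*ℓ)^2 by ring, Real.sqrt_sq hsl.le]
    unfold energy
    rw [h1, intervalIntegral.integral_const, smul_eq_mul]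
    ring
  have hbddB : BddBelow {x | ∃ γ γ' : ℝ → ℝ, Admissible γ γ' ∧ x = energy f₁ s γ γ'} := by
    refine ⟨0, ?_⟩
    rintro x ⟨g, g', _, rfl⟩
    exact intervalIntegral.integral_nonneg zero_le_one (fun u _ => Real.sqrt_nonneg _)
  have hg0le : g0 f₁ s ≤ s * ℓ := csInf_le hbddB hzero_mem
  have hEle : energy f₁ s γ γ' ≤ s * ℓ := by rw [hmin]; exact hg0le
  -- the max M
  set M := sSup (γ '' Icc (0:ℝ) 1) with hMdef
  have hbddA : BddAbove (γ '' Icc (0:ℝ) 1) := ⟨1, by rintro y ⟨u, hu, rfl⟩; exact (hbnd u hu).2⟩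
  have hMub : ∀ u ∈ Icc (0:ℝ) 1, γ u ≤ M := fun u hu => le_csSup hbddA ⟨u, hu, rfl⟩
  have h01 : (0:ℝ) ∈ Icc (0:ℝ) 1 := ⟨le_rfl, zero_le_one⟩
  have h11 : (1:ℝ) ∈ Icc (0:ℝ) 1 := ⟨zero_le_one, le_rfl⟩
  have hM0 : 0 ≤ M := le_trans (hbnd 0 h01).1 (hMub 0 h01)
  -- total variation lower bound
  set I := ∫ u in Icc (0:ℝ) 1, |γ' u| with hIdef
  have habs : IntegrableOn (fun u => |γ' u|) (Icc (0:ℝ) 1) := hint.abs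
  have hI : 2 * M ≤ I := by
    have key : ∀ u ∈ Icc (0:ℝ) 1, γ u ≤ I / 2 := by
      intro u hu
      have hs1' : Icc (0:ℝ) u ⊆ Icc 0 1 := Icc_subset_Icc le_rfl hu.2
      have hs2' : Icc u (1:ℝ) ⊆ Icc 0 1 := Icc_subset_Icc hu.1 le_rfl
      have hii1 : IntervalIntegrable γ' volume 0 u :=
        (hint.mono_set (by rw [uIcc_of_le hu.1]; exact hs1')).intervalIntegrable
      have hii2 : IntervalIntegrable γ' volume u 1 :=
        (hint.mono_set (by rw [uIcc_of_le hu.2]; exact hs2')).intervalIntegrable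
      have hia1 : IntervalIntegrable (fun v => |γ' v|) volume 0 u :=
        (habs.mono_set (by rw [uIcc_of_le hu.1]; exact hs1')).intervalIntegrable
      have hia2 : IntervalIntegrable (fun v => |γ' v|) volume u 1 :=
        (habs.mono_set (by rw [uIcc_of_le hu.2]; exact hs2')).intervalIntegrable
      have e1 : γ u ≤ ∫ v in (0:ℝ)..u, |γ' v| := by
        rw [hftc u hu]
        exact (le_abs_self _).trans (intervalIntegral.abs_integral_le_integral_abs hu.1)
      have esum : (∫ v in (0:ℝ)..u, γ' v) + ∫ v in u..(1:ℝ), γ' v = ∫ v in (0:ℝ)..(1:ℝ), γ' v :=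
        intervalIntegral.integral_add_adjacent_intervals hii1 hii2
      have hz : (∫ v in (0:ℝ)..(1:ℝ), γ' v) = 0 := by
        have h := hftc 1 h11; rw [hg1] at h; exact h.symm
      have e2 : γ u ≤ ∫ v in u..(1:ℝ), |γ' v| := by
        have hneg : γ u = -(∫ v in u..(1:ℝ), γ' v) := by
          rw [hftc u hu]; rw [hz] at esum; linarith
        rw [hneg]
        exact (neg_le_abs _).trans (intervalIntegral.abs_integral_le_integral_abs hu.2)
      have easum : (∫ v in (0:ℝ)..u, |γ' v|) + ∫ v in u..(1:ℝ), |γ' v| = I := by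
        rw [intervalIntegral.integral_add_adjacent_intervals hia1 hia2,
          intervalIntegral.integral_of_le zero_le_one, hIdef, integral_Icc_eq_integral_Ioc]
      linarith
    have hsup := csSup_le (Set.Nonempty.image γ ⟨0, h01⟩)
      (by rintro y ⟨u, hu, rfl⟩; exact key u hu)
    rw [← hMdef] at hsup
    linarith
  -- continuity and measurability
  have hγcont : ContinuousOn γ (Icc (0:ℝ) 1) := by
    have h1 := intervalIntegral.continuousOn_primitive (μ := volume) (f := γ')
      (a := (0:ℝ)) (b := (1:ℝ)) hint
    exact ContinuousOn.congr h1
      (fun u hu => by rw [hftc u hu, intervalIntegral.integral_of_le hu.1])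
  have hmaps : ∀ u ∈ Icc (0:ℝ) 1, Real.sqrt (γ u) ∈ Icc (0:ℝ) 1 := fun u hu =>
    ⟨Real.sqrt_nonneg _, Real.sqrt_le_one.mpr (hbnd u hu).2⟩
  have hfcont : ContinuousOn (fun u => f₁ (Real.sqrt (γ u))) (Icc (0:ℝ) 1) :=
    ContinuousOn.comp hf.cont (Real.continuous_sqrt.comp_continuousOn hγcont)
      (fun u hu => hmaps u hu)
  have hfm : AEStronglyMeasurable (fun u => f₁ (Real.sqrt (γ u)))
      (volume.restrict (Icc (0:ℝ) 1)) := hfcont.aestronglyMeasurable measurableSet_Icc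
  have hγ'm : AEStronglyMeasurable γ' (volume.restrict (Icc (0:ℝ) 1)) := hint.1
  set F := fun u : ℝ => Real.sqrt (s ^ 2 * (f₁ (Real.sqrt (γ u))) ^ 2 + (γ' u) ^ 2 / 4)
    with hFdef
  have hFm : AEStronglyMeasurable F (volume.restrict (Icc (0:ℝ) 1)) := by
    have h1 : AEMeasurable (fun u => s ^ 2 * (f₁ (Real.sqrt (γ u))) ^ 2 + (γ' u) ^ 2 / 4)
        (volume.restrict (Icc (0:ℝ) 1)) :=
      ((hfm.aemeasurable.pow_const 2).const_mul _).add ((hγ'm.aemeasurable.pow_const 2).div_const 4)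
    exact (Real.continuous_sqrt.measurable.comp_aemeasurable h1).aestronglyMeasurable
  have hf1bd : ∀ u ∈ Icc (0:ℝ) 1, 0 ≤ f₁ (Real.sqrt (γ u)) ∧ f₁ (Real.sqrt (γ u)) ≤ ℓ := by
    intro u hu
    refine ⟨hf.nonneg _ (hmaps u hu), ?_⟩
    have h := hf.anti.antitoneOn h01 (hmaps u hu) (Real.sqrt_nonneg _)
    rwa [hf.f10] at h
  have hFu : ∀ u : ℝ, F u = Real.sqrt ((s * f₁ (Real.sqrt (γ u)))^2 + (|γ' u|/2)^2) := by
    intro u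
    simp only [hFdef]
    congr 1
    rw [div_pow, sq_abs]; ring
  have hFbound : ∀ u ∈ Icc (0:ℝ) 1, F u ≤ s * ℓ + |γ' u| / 2 := by
    intro u hu
    rw [hFu u]
    calc Real.sqrt ((s * f₁ (Real.sqrt (γ u)))^2 + (|γ' u|/2)^2)
        ≤ Real.sqrt ((s * f₁ (Real.sqrt (γ u)))^2) + Real.sqrt ((|γ' u|/2)^2) :=
          sqrt_add_le' (sq_nonneg _) (sq_nonneg _)
      _ = s * f₁ (Real.sqrt (γ u)) + |γ' u|/2 := by
          rw [Real.sqrt_sq (mul_nonneg hs0.le (hf1bd u hu).1), Real.sqrt_sq (by positivity)]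
      _ ≤ s * ℓ + |γ' u|/2 := by nlinarith [(hf1bd u hu).2, hs0.le]
  have hFint : IntegrableOn F (Icc (0:ℝ) 1) := by
    apply Integrable.mono' ((hconst (s*ℓ)).add (habs.div_const 2)) hFm
    filter_upwards [ae_restrict_mem measurableSet_Icc] with u hu
    rw [Real.norm_eq_abs, abs_of_nonneg (Real.sqrt_nonneg _)]
    exact hFbound u hu
  -- lower bound integrand
  set m := min (M / (4 * (s * ℓ))) (1/2) with hmdef
  have hm0 : 0 ≤ m := le_min (by positivity) (by norm_num)
  set G := fun u : ℝ => s * (ℓ - K * Real.sqrt M) + (1/3) * m * (|γ' u| - M) with hGdef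
  have hGint : IntegrableOn G (Icc (0:ℝ) 1) :=
    (hconst _).add ((habs.sub (hconst M)).const_mul _)
  have hGF : ∀ u ∈ Icc (0:ℝ) 1, G u ≤ F u := by
    intro u hu
    have ha0 : 0 ≤ s * f₁ (Real.sqrt (γ u)) := mul_nonneg hs0.le (hf1bd u hu).1
    have haL : s * f₁ (Real.sqrt (γ u)) ≤ s * ℓ :=
      mul_le_mul_of_nonneg_left (hf1bd u hu).2 hs0.le
    have h1 := lemA ha0 haL (by positivity : (0:ℝ) ≤ |γ' u|/2) hsl
    have h2 := lemB (abs_nonneg (γ' u)) hM0 hsl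
    have hmin_eq : min ((|γ' u|/2)^2 / (s*ℓ)) (|γ' u|/2)
        = min (|γ' u|^2/(4*(s*ℓ))) (|γ' u|/2) := by
      congr 1
      rw [div_pow, div_div]
      norm_num
    have hsql : Real.sqrt (γ u) ≤ Real.sqrt M := Real.sqrt_le_sqrt (hMub u hu)
    have hflow : ℓ - K * Real.sqrt M ≤ f₁ (Real.sqrt (γ u)) := by
      have h3 := hlow _ (hmaps u hu)
      nlinarith [hK0.le]
    have hA := mul_le_mul_of_nonneg_left hflow hs0.le
    have hB : m * (|γ' u| - M) ≤ min ((|γ' u|/2)^2/(s*ℓ)) (|γ' u|/2) := by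
      rw [hmin_eq]; exact h2
    calc G u = s * (ℓ - K * Real.sqrt M) + (1/3) * (m * (|γ' u| - M)) := by
          simp only [hGdef]; ring
      _ ≤ s * f₁ (Real.sqrt (γ u)) + (1/3) * min ((|γ' u|/2)^2/(s*ℓ)) (|γ' u|/2) := by
          linarith
      _ ≤ Real.sqrt ((s * f₁ (Real.sqrt (γ u)))^2 + (|γ' u|/2)^2) := h1
      _ = F u := (hFu u).symm
  have hvol : (volume (Icc (0:ℝ) 1)).toReal = 1 := by
    rw [Real.volume_Icc]; norm_num
  have hGeval : ∫ u in Icc (0:ℝ) 1, G u = s * (ℓ - K * Real.sqrt M) + (1/3) * m * (I - M) := by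
    have hsplit : G = fun u => ((1/3) * m) * |γ' u| + (s * (ℓ - K * Real.sqrt M) - (1/3)*m*M) := by
      funext u; simp only [hGdef]; ring
    rw [hsplit, integral_add (habs.const_mul _) (hconst _), integral_const_mul,
      setIntegral_const, measureReal_def, hvol, smul_eq_mul, ← hIdef]
    ring
  have hEF : energy f₁ s γ γ' = ∫ u in Icc (0:ℝ) 1, F u := by
    unfold energy
    rw [intervalIntegral.integral_of_le zero_le_one, integral_Icc_eq_integral_Ioc]
  have hchain : s * (ℓ - K * Real.sqrt M) + (1/3) * m * (I - M) ≤ s * ℓ := by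
    calc s * (ℓ - K * Real.sqrt M) + (1/3) * m * (I - M)
        = ∫ u in Icc (0:ℝ) 1, G u := hGeval.symm
      _ ≤ ∫ u in Icc (0:ℝ) 1, F u := setIntegral_mono_on hGint hFint measurableSet_Icc hGF
      _ = energy f₁ s γ γ' := hEF.symm
      _ ≤ s * ℓ := hEle
  have hkey : m * M ≤ 3 * s * K * Real.sqrt M := by
    have hexp : s * (ℓ - K * Real.sqrt M) = s*ℓ - s*(K*Real.sqrt M) := by ring
    have h1 : m * (I - M) ≤ 3 * s * K * Real.sqrt M := by nlinarith [hchain, hexp]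
    have h2 : m * M ≤ m * (I - M) := mul_le_mul_of_nonneg_left (by linarith) hm0
    linarith
  have hs43 : (0:ℝ) < s ^ ((4:ℝ)/3) := Real.rpow_pos_of_pos hs0 _
  have hfinal : M ≤ C * s ^ ((4:ℝ)/3) := by
    rcases le_total (M / (4 * (s * ℓ))) (1/2) with hc | hc
    · have hm : m = M / (4 * (s * ℓ)) := min_eq_left hc
      have h1 : M^2 ≤ 12 * ℓ * K * s^2 * Real.sqrt M := by
        have h := hkey
        rw [hm, div_mul_eq_mul_div, div_le_iff₀ (by positivity)] at h
        nlinarith [h]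
      rcases eq_or_lt_of_le hM0 with h0 | h0
      · rw [← h0]; positivity
      · have hsM : 0 < Real.sqrt M := Real.sqrt_pos.mpr h0
        have hq : M ^ ((3:ℝ)/2) * Real.sqrt M = M^2 := by
          rw [Real.sqrt_eq_rpow, ← Real.rpow_add h0]
          norm_num
        have h32 : M ^ ((3:ℝ)/2) ≤ 12*ℓ*K*s^2 := by
          have h' : M ^ ((3:ℝ)/2) * Real.sqrt M ≤ (12*ℓ*K*s^2) * Real.sqrt M := by
            rw [hq]; linarith [h1]
          exact le_of_mul_le_mul_right h' hsM
        have e1 : M = (M ^ ((3:ℝ)/2)) ^ ((2:ℝ)/3) := by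
          rw [← Real.rpow_mul hM0]
          norm_num
        have e2 : (M ^ ((3:ℝ)/2)) ^ ((2:ℝ)/3) ≤ (12*ℓ*K*s^2) ^ ((2:ℝ)/3) :=
          Real.rpow_le_rpow (Real.rpow_nonneg hM0 _) h32 (by norm_num)
        have e3 : ((12*ℓ*K)*s^2) ^ ((2:ℝ)/3) = (12*ℓ*K)^((2:ℝ)/3) * s ^ ((4:ℝ)/3) := by
          rw [Real.mul_rpow (by positivity) (sq_nonneg s), ← Real.rpow_natCast s 2,
            ← Real.rpow_mul hs0.le]
          norm_num
        have e4 : (12*ℓ*K)^((2:ℝ)/3) * s ^ ((4:ℝ)/3) ≤ C * s ^ ((4:ℝ)/3) := by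
          apply mul_le_mul_of_nonneg_right _ hs43.le
          rw [hCdef]
          nlinarith [sq_nonneg K]
        calc M = (M ^ ((3:ℝ)/2)) ^ ((2:ℝ)/3) := e1
          _ ≤ (12*ℓ*K*s^2) ^ ((2:ℝ)/3) := e2
          _ = (12*ℓ*K)^((2:ℝ)/3) * s ^ ((4:ℝ)/3) := e3
          _ ≤ C * s ^ ((4:ℝ)/3) := e4
    · have hm : m = 1/2 := min_eq_right hc
      rw [hm] at hkey
      have hsqle : Real.sqrt M ≤ 6*s*K := by
        rcases eq_or_lt_of_le hM0 with h0 | h0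
        · rw [← h0, Real.sqrt_zero]; positivity
        · have hsM : 0 < Real.sqrt M := Real.sqrt_pos.mpr h0
          have h' : Real.sqrt M * Real.sqrt M ≤ (6*s*K) * Real.sqrt M := by
            rw [Real.mul_self_sqrt hM0]; linarith [hkey]
          exact le_of_mul_le_mul_right h' hsM
      have hMle : M ≤ 36*K^2*s^2 := by
        nlinarith [Real.mul_self_sqrt hM0, Real.sqrt_nonneg M, hsqle]
      have hs2 : s^2 ≤ s ^ ((4:ℝ)/3) := by
        rw [← Real.rpow_natCast s 2]
        apply Real.rpow_le_rpow_of_exponent_ge hs0 hs1.le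
        norm_num
      have hr0 : (0:ℝ) ≤ (12*ℓ*K) ^ ((2:ℝ)/3) := Real.rpow_nonneg (by positivity) _
      calc M ≤ 36*K^2*s^2 := hMle
        _ ≤ 36*K^2 * s ^ ((4:ℝ)/3) := by nlinarith [hs2, sq_nonneg K]
        _ ≤ C * s ^ ((4:ℝ)/3) := by
            apply mul_le_mul_of_nonneg_right _ hs43.le
            rw [hCdef]; linarith
  exact le_trans (hMub t ht) hfinal
end
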